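/- arXiv:1712.05864 — 7 statements merged into one kernel-verified Lean document; each statement's English description precedes it below -/
import Mathlib

section
/- ADI error equation: Let A ∈ ℂ^{m×m}, B ∈ ℂ^{n×n}, F ∈ ℂ^{m×n}, and suppose X satisfies AX − XB = F. Let shift parameters (α_1, β_1), …, (α_k, β_k) ∈ ℂ² be such that no β_j is an eigenvalue of A and no α_j is an eigenvalue of B. Define the ADI iterates by X^{(0)} = 0 and, for j ≥ 0, (A − β_{j+1}I)X^{(j+1/2)} = X^{(j)}(B − β_{j+1}I) + F and X^{(j+1)}(B − α_{j+1}I) = (A − α_{j+1}I)X^{(j+1/2)} − F. Then X − X^{(k)} = r_k(A) · X · r_k(B)^{−1}, where r_k(z) = Π_{j=1}^{k} (z − α_j)/(z − β_j), r_k(A) = Π_{j=1}^{k}(A − α_jI)(A − β_jI)^{−1}, and r_k(B)^{−1} = Π_{j=1}^{k}(B − β_jI)(B − α_jI)^{−1}. -/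
/-- The ordered product `f 0 * f 1 * ⋯ * f (k-1)` of square matrices. -/
noncomputable def matProd {m : ℕ} (f : ℕ → Matrix (Fin m) (Fin m) ℂ) :
    ℕ → Matrix (Fin m) (Fin m) ℂ
  | 0 => 1
  | k + 1 => matProd f k * f k

private lemma commute_inv_right {m : ℕ} {M N : Matrix (Fin m) (Fin m) ℂ}
    (h : Commute M N) (hN : IsUnit N.det) : Commute M N⁻¹ := by
  unfold Commute SemiconjBy
  calc M * N⁻¹ = (N⁻¹ * N) * (M * N⁻¹) := by
        rw [Matrix.nonsing_inv_mul _ hN, Matrix.one_mul]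
    _ = N⁻¹ * (N * M) * N⁻¹ := by simp only [Matrix.mul_assoc]
    _ = N⁻¹ * (M * N) * N⁻¹ := by rw [h.eq]
    _ = N⁻¹ * M * (N * N⁻¹) := by simp only [Matrix.mul_assoc]
    _ = N⁻¹ * M := by rw [Matrix.mul_nonsing_inv _ hN, Matrix.mul_one]

private lemma shift_commute {m : ℕ} (A : Matrix (Fin m) (Fin m) ℂ) (c d : ℂ) :
    Commute (A - c • 1) (A - d • 1) := by
  have h1 : Commute A (A - d • 1) :=
    (Commute.refl A).sub_right ((Commute.one_right A).smul_right d)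
  have h2 : Commute ((c : ℂ) • (1 : Matrix (Fin m) (Fin m) ℂ)) (A - d • 1) :=
    ((Commute.one_left A).sub_right ((Commute.one_left 1).smul_right d)).smul_left c
  exact h1.sub_left h2

private lemma unit_of_not_spectrum {m : ℕ} {A : Matrix (Fin m) (Fin m) ℂ} {c : ℂ}
    (h : c ∉ spectrum ℂ A) : IsUnit (A - c • 1).det := by
  rw [spectrum.notMem_iff] at h
  rw [Algebra.algebraMap_eq_smul_one] at h
  have : IsUnit (A - c • 1) := by
    have := h.neg
    rwa [neg_sub] at this
  rwa [← Matrix.isUnit_iff_isUnit_det]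

/-- **ADI error equation.**  If `X` solves `AX - XB = F` and `X⁽ᵏ⁾` is the `k`-th ADI
iterate with shift parameters `(αⱼ, βⱼ)` (no `βⱼ` an eigenvalue of `A`, no `αⱼ` an
eigenvalue of `B`), starting from `X⁽⁰⁾ = 0`, then
`X - X⁽ᵏ⁾ = r_k(A) · X · r_k(B)⁻¹` where
`r_k(A) = ∏ⱼ (A - αⱼI)(A - βⱼI)⁻¹` and `r_k(B)⁻¹ = ∏ⱼ (B - βⱼI)(B - αⱼI)⁻¹`. -/
theorem adi_error_equation {m n : ℕ}
    (A : Matrix (Fin m) (Fin m) ℂ) (B : Matrix (Fin n) (Fin n) ℂ)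
    (F X : Matrix (Fin m) (Fin n) ℂ) (hX : A * X - X * B = F)
    (k : ℕ) (α β : ℕ → ℂ)
    (hβ : ∀ j < k, β j ∉ spectrum ℂ A)
    (hα : ∀ j < k, α j ∉ spectrum ℂ B)
    (Xfull Xhalf : ℕ → Matrix (Fin m) (Fin n) ℂ)
    (h0 : Xfull 0 = 0)
    (hstep1 : ∀ j < k, (A - β j • 1) * Xhalf j = Xfull j * (B - β j • 1) + F)
    (hstep2 : ∀ j < k, Xfull (j + 1) * (B - α j • 1) = (A - α j • 1) * Xhalf j - F) :
    X - Xfull k =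
      matProd (fun j => (A - α j • 1) * (A - β j • 1)⁻¹) k * X *
        matProd (fun j => (B - β j • 1) * (B - α j • 1)⁻¹) k := by
  set fA : ℕ → Matrix (Fin m) (Fin m) ℂ := fun j => (A - α j • 1) * (A - β j • 1)⁻¹ with hfA
  set gB : ℕ → Matrix (Fin n) (Fin n) ℂ := fun j => (B - β j • 1) * (B - α j • 1)⁻¹ with hgB
  -- the factors fA all commute with each other
  have hcomm : ∀ i j, Commute (fA i) (fA j) := by
    intro i j
    have base : ∀ a b : ℂ, Commute (A - a • 1) ((A - b • 1)⁻¹) := by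
      intro a b
      by_cases hb : IsUnit (A - b • 1).det
      · exact commute_inv_right (shift_commute A a b) hb
      · rw [Matrix.nonsing_inv_apply_not_isUnit _ hb]
        exact Commute.zero_right _
    have base2 : ∀ a b : ℂ, Commute ((A - a • 1)⁻¹) ((A - b • 1)⁻¹) := by
      intro a b
      by_cases hb : IsUnit (A - b • 1).det
      · exact commute_inv_right ((base b a).symm) hb
      · rw [Matrix.nonsing_inv_apply_not_isUnit _ hb]
        exact Commute.zero_right _
    have c1 : Commute (A - α i • 1) (A - α j • 1) := shift_commute A (α i) (α j)
    have c2 : Commute (A - α i • 1) ((A - β j • 1)⁻¹) := base (α i) (β j)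
    have c3 : Commute ((A - β i • 1)⁻¹) (A - α j • 1) := (base (α j) (β i)).symm
    have c4 : Commute ((A - β i • 1)⁻¹) ((A - β j • 1)⁻¹) := base2 (β i) (β j)
    exact (c1.mul_right c2).mul_left (c3.mul_right c4)
  -- hence fA j commutes with all partial products
  have hcommProd : ∀ j l, Commute (fA j) (matProd fA l) := by
    intro j l
    induction l with
    | zero => exact Commute.one_right _
    | succ l ih => exact ih.mul_right (hcomm j l)
  -- the one-step error recurrence
  have key : ∀ j < k, X - Xfull (j + 1) = fA j * (X - Xfull j) * gB j := by
    intro j hj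
    have hβu := unit_of_not_spectrum (hβ j hj)
    have hαu := unit_of_not_spectrum (hα j hj)
    have e1 : (A - β j • 1) * X = X * (B - β j • 1) + F := by
      rw [← hX, Matrix.sub_mul, Matrix.mul_sub, Matrix.smul_mul, Matrix.mul_smul,
        Matrix.one_mul, Matrix.mul_one]
      abel
    have e2 : X * (B - α j • 1) = (A - α j • 1) * X - F := by
      rw [← hX, Matrix.sub_mul, Matrix.mul_sub, Matrix.smul_mul, Matrix.mul_smul,
        Matrix.one_mul, Matrix.mul_one]
      abel
    have h1 : (A - β j • 1) * (X - Xhalf j) = (X - Xfull j) * (B - β j • 1) := by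
      rw [Matrix.mul_sub, e1, hstep1 j hj, Matrix.sub_mul]
      abel
    have hXhalf : X - Xhalf j = (A - β j • 1)⁻¹ * ((X - Xfull j) * (B - β j • 1)) := by
      rw [← h1, ← Matrix.mul_assoc, Matrix.nonsing_inv_mul _ hβu, Matrix.one_mul]
    have h2 : (X - Xfull (j + 1)) * (B - α j • 1) = (A - α j • 1) * (X - Xhalf j) := by
      rw [Matrix.sub_mul, e2, hstep2 j hj, Matrix.mul_sub]
      abel
    have : X - Xfull (j + 1) =
        (A - α j • 1) * (X - Xhalf j) * (B - α j • 1)⁻¹ := by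
      rw [← h2, Matrix.mul_assoc, Matrix.mul_nonsing_inv _ hαu, Matrix.mul_one]
    rw [this, hXhalf, hfA, hgB]
    simp only [Matrix.mul_assoc]
  -- main induction
  clear hstep1 hstep2 hX
  induction k with
  | zero => simp [h0, matProd]
  | succ k ih =>
    have hk : k < k + 1 := Nat.lt_succ_self k
    have ihk := ih (fun j hj => hβ j (hj.trans hk)) (fun j hj => hα j (hj.trans hk))
      (fun j hj => key j (hj.trans hk))
    rw [key k hk, ihk]
    show fA k * (matProd fA k * X * matProd gB k) * gB k = _
    rw [matProd, matProd]
    rw [← Matrix.mul_assoc, ← Matrix.mul_assoc, ← (hcommProd k k).eq]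
    simp only [Matrix.mul_assoc]
    rfl
end

section
/- ADI-based singular value bound for normal matrices: Let A ∈ ℂ^{m×m} and B ∈ ℂ^{n×n} (m ≥ n) be normal matrices with disjoint spectra, let F ∈ ℂ^{m×n} have rank ρ, and let X be the unique solution of AX − XB = F. Let (α_1, β_1), …, (α_k, β_k) ∈ ℂ² be such that no β_j is an eigenvalue of A and no α_j is an eigenvalue of B, and set r_k(z) = Π_{j=1}^{k} (z − α_j)/(z − β_j). Then, whenever 0 ≤ kρ < n, σ_{kρ+1}(X) ≤ ( sup_{z ∈ λ(A)} |r_k(z)| ) · ( sup_{w ∈ λ(B)} 1/|r_k(w)| ) · ‖X‖₂, where λ(A) and λ(B) denote the spectra of A and B. -/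
/-- The spectral norm of a complex matrix. -/
noncomputable def specNorm {m n : ℕ} (M : Matrix (Fin m) (Fin n) ℂ) : ℝ :=
  ‖LinearMap.toContinuousLinearMap (Matrix.toEuclideanLin M)‖

/-- The `j`-th largest singular value of a complex matrix (for `j ≥ 1`), via the
Eckart–Young characterization `σ_j(M) = min {‖M - N‖₂ : rank N < j}`. -/
noncomputable def singularValue {m n : ℕ} (M : Matrix (Fin m) (Fin n) ℂ) (j : ℕ) : ℝ :=
  sInf ((fun N : Matrix (Fin m) (Fin n) ℂ => specNorm (M - N)) '' {N | N.rank < j})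

open scoped Matrix.Norms.L2Operator
open Finset

noncomputable instance matCStar {d : ℕ} : CStarAlgebra (Matrix (Fin d) (Fin d) ℂ) :=
  { Matrix.instL2OpNormedRing, Matrix.instL2OpNormedAlgebra, Matrix.instCStarRing,
    (inferInstance : StarRing (Matrix (Fin d) (Fin d) ℂ)),
    (inferInstance : CompleteSpace (Matrix (Fin d) (Fin d) ℂ)),
    (inferInstance : StarModule ℂ (Matrix (Fin d) (Fin d) ℂ)) with }

namespace ADIAux

variable {d : ℕ}

local notation "Mat" d => Matrix (Fin d) (Fin d) ℂ

lemma isUnit_sub_smul {M : Mat d} {c : ℂ} (h : c ∉ spectrum ℂ M) :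
    IsUnit (M - c • 1) := by
  rw [spectrum.mem_iff, not_not] at h
  have := h.neg
  rwa [neg_sub, Algebra.algebraMap_eq_smul_one] at this

lemma commute_sub_smul (M : Mat d) (c c' : ℂ) : Commute (M - c • 1) (M - c' • 1) := by
  show _ * _ = _ * _
  simp only [sub_mul, mul_sub, smul_mul_assoc, mul_smul_comm, one_mul, mul_one, smul_smul,
    smul_sub]
  module

lemma commute_inv_right {P Q : Mat d} (h : IsUnit Q) (hc : Commute P Q) : Commute P Q⁻¹ := by
  have hd := (Matrix.isUnit_iff_isUnit_det Q).mp h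
  have h1 : Q * Q⁻¹ = 1 := Matrix.mul_nonsing_inv _ hd
  have h2 : Q⁻¹ * Q = 1 := Matrix.nonsing_inv_mul _ hd
  show P * Q⁻¹ = Q⁻¹ * P
  calc P * Q⁻¹ = (Q⁻¹ * Q) * (P * Q⁻¹) := by rw [h2, one_mul]
    _ = Q⁻¹ * (Q * P) * Q⁻¹ := by rw [mul_assoc, mul_assoc, mul_assoc]
    _ = Q⁻¹ * (P * Q) * Q⁻¹ := by rw [hc.eq]
    _ = Q⁻¹ * P * (Q * Q⁻¹) := by rw [mul_assoc, mul_assoc, mul_assoc]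
    _ = Q⁻¹ * P := by rw [h1, mul_one]

lemma commute_factor_smul {M : Mat d} {a b : ℂ} (hb : IsUnit (M - b • 1)) (c : ℂ) :
    Commute ((M - a • 1) * (M - b • 1)⁻¹) (M - c • 1) :=
  Commute.mul_left (commute_sub_smul M a c)
    ((commute_inv_right hb (commute_sub_smul M c b)).symm)

lemma commute_factor_factor {M : Mat d} {a b a' b' : ℂ} (hb : IsUnit (M - b • 1))
    (hb' : IsUnit (M - b' • 1)) :
    Commute ((M - a • 1) * (M - b • 1)⁻¹) ((M - a' • 1) * (M - b' • 1)⁻¹) :=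
  Commute.mul_right (commute_factor_smul hb a')
    (commute_inv_right hb' (commute_factor_smul hb b'))

variable (α β : ℕ → ℂ)

/-- The rational matrix function `∏ (M - αⱼ)(M - βⱼ)⁻¹`. -/
noncomputable def Rp (M : Mat d) (k : ℕ) : Mat d :=
  ((List.range k).map (fun j => (M - α j • 1) * (M - β j • 1)⁻¹)).prod

/-- The polynomial matrix product `∏ (M - cⱼ)`. -/
noncomputable def Pp (c : ℕ → ℂ) (M : Mat d) (k : ℕ) : Mat d :=
  ((List.range k).map (fun j => M - c j • 1)).prod

lemma Pp_succ (c : ℕ → ℂ) (M : Mat d) (t : ℕ) :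
    Pp c M (t + 1) = Pp c M t * (M - c t • 1) := by
  simp [Pp, List.prod_range_succ]

lemma Rp_succ (M : Mat d) (t : ℕ) :
    Rp α β M (t + 1) = Rp α β M t * ((M - α t • 1) * (M - β t • 1)⁻¹) := by
  simp [Rp, List.prod_range_succ]

lemma isUnit_Pp {M : Mat d} {c : ℕ → ℂ} {k : ℕ} (hc : ∀ j < k, IsUnit (M - c j • 1)) :
    IsUnit (Pp c M k) := by
  induction k with
  | zero => simp [Pp]
  | succ t ih =>
    rw [Pp_succ]
    exact (ih fun j hj => hc j (hj.trans t.lt_succ_self)).mul (hc t t.lt_succ_self)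

lemma Rp_mul_Pp {M : Mat d} {k : ℕ} (hb : ∀ j < k, IsUnit (M - β j • 1)) :
    Rp α β M k * Pp β M k = Pp α M k := by
  induction k with
  | zero => simp [Rp, Pp]
  | succ t ih =>
    have hb' : ∀ j < t, IsUnit (M - β j • 1) := fun j hj => hb j (hj.trans t.lt_succ_self)
    have hbt : IsUnit (M - β t • 1) := hb t t.lt_succ_self
    have hdet := (Matrix.isUnit_iff_isUnit_det _).mp hbt
    set C : Mat d := (M - α t • 1) * (M - β t • 1)⁻¹ with hC
    have hcomm : Commute C (Pp β M t) :=
      Commute.list_prod_right _ _ (by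
        intro x hx
        simp only [List.mem_map, List.mem_range] at hx
        obtain ⟨i, -, rfl⟩ := hx
        exact commute_factor_smul hbt (β i))
    rw [Rp_succ, Pp_succ, Pp_succ]
    calc Rp α β M t * C * (Pp β M t * (M - β t • 1))
        = Rp α β M t * ((C * Pp β M t) * (M - β t • 1)) := by
          rw [mul_assoc, ← mul_assoc C]
      _ = Rp α β M t * ((Pp β M t * C) * (M - β t • 1)) := by rw [hcomm.eq]
      _ = (Rp α β M t * Pp β M t) * (C * (M - β t • 1)) := by
          rw [mul_assoc, mul_assoc, mul_assoc]
      _ = Pp α M t * (M - α t • 1) := by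
          rw [ih hb', hC, mul_assoc, Matrix.nonsing_inv_mul _ hdet, mul_one]

lemma continuousOn_ratProd {k : ℕ} {a b : ℕ → ℂ} {s : Set ℂ}
    (h : ∀ j < k, ∀ z ∈ s, z ≠ b j) :
    ContinuousOn (fun z => ∏ j ∈ range k, (z - a j) / (z - b j)) s := by
  induction k with
  | zero => simpa using continuousOn_const
  | succ t ih =>
    have he : (fun z => ∏ j ∈ range (t + 1), (z - a j) / (z - b j))
        = fun z => (∏ j ∈ range t, (z - a j) / (z - b j)) * ((z - a t) / (z - b t)) := by
      funext z; rw [prod_range_succ]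
    rw [he]
    exact (ih fun j hj => h j (hj.trans t.lt_succ_self)).mul
      (((continuousOn_id.sub continuousOn_const)).div
        (continuousOn_id.sub continuousOn_const)
        (fun z hz => sub_ne_zero.mpr (h t t.lt_succ_self z hz)))

lemma continuous_polyProd (c : ℕ → ℂ) (k : ℕ) :
    Continuous (fun z : ℂ => ∏ j ∈ range k, (z - c j)) :=
  continuous_finset_prod _ fun i _ => continuous_id.sub continuous_const

lemma cfc_polyProd (M : Mat d) (hM : IsStarNormal M) (hd : 0 < d) (c : ℕ → ℂ) (k : ℕ) :
    cfc (fun z : ℂ => ∏ j ∈ range k, (z - c j)) M = Pp c M k := by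
  haveI : Nonempty (Fin d) := ⟨⟨0, hd⟩⟩
  induction k with
  | zero => simpa [Pp] using cfc_const_one ℂ M
  | succ t ih =>
    have he : (fun z : ℂ => ∏ j ∈ range (t + 1), (z - c j))
        = fun z => (∏ j ∈ range t, (z - c j)) * (z - c t) := by
      funext z; rw [prod_range_succ]
    rw [he, Pp_succ,
      cfc_mul (fun z : ℂ => ∏ j ∈ range t, (z - c j)) (fun z : ℂ => z - c t) M
        ((continuous_polyProd c t).continuousOn) (by fun_prop), ih]
    congr 1
    rw [cfc_sub (fun z : ℂ => z) (fun _ => c t) M continuousOn_id continuousOn_const,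
      cfc_id' ℂ M, cfc_const (c t) M, Algebra.algebraMap_eq_smul_one]

lemma cfc_eq_Rp (M : Mat d) (hM : IsStarNormal M) (hd : 0 < d) {k : ℕ}
    (hb : ∀ j < k, β j ∉ spectrum ℂ M) :
    cfc (fun z : ℂ => ∏ j ∈ range k, (z - α j) / (z - β j)) M = Rp α β M k := by
  have hbu : ∀ j < k, IsUnit (M - β j • 1) := fun j hj => isUnit_sub_smul (hb j hj)
  have hPu : IsUnit (Pp β M k) := isUnit_Pp hbu
  have hne : ∀ j < k, ∀ z ∈ spectrum ℂ M, z ≠ β j := fun j hj z hz e =>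
    hb j hj (e ▸ hz)
  have hf : ContinuousOn (fun z : ℂ => ∏ j ∈ range k, (z - α j) / (z - β j))
      (spectrum ℂ M) := continuousOn_ratProd hne
  apply hPu.mul_right_cancel
  rw [Rp_mul_Pp α β hbu, ← cfc_polyProd M hM hd β k,
    ← cfc_mul (fun z : ℂ => ∏ j ∈ range k, (z - α j) / (z - β j)) (fun z : ℂ => ∏ j ∈ range k, (z - β j)) M hf (continuous_polyProd β k).continuousOn,
    ← cfc_polyProd M hM hd α k]
  apply cfc_congr
  intro z hz
  show (∏ j ∈ range k, (z - α j) / (z - β j)) * (∏ j ∈ range k, (z - β j))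
      = ∏ j ∈ range k, (z - α j)
  rw [← prod_mul_distrib]
  exact Finset.prod_congr rfl fun j hj =>
    div_mul_cancel₀ _ (sub_ne_zero.mpr (hne j (mem_range.mp hj) z hz))

lemma norm_cfc_le_biSup (M : Mat d) (hd : 0 < d) (f : ℂ → ℂ) :
    ‖cfc f M‖ ≤ ⨆ z ∈ spectrum ℂ M, ‖f z‖ := by
  haveI : Nonempty (Fin d) := ⟨⟨0, hd⟩⟩
  have hK : (Set.range (fun z : ℂ => ⨆ _ : z ∈ spectrum ℂ M, ‖f z‖)).Finite := by
    apply Set.Finite.subset (Set.Finite.insert 0 (((Matrix.finite_spectrum M).image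
      (fun z => ‖f z‖))))
    rintro - ⟨z, rfl⟩
    by_cases hz : z ∈ spectrum ℂ M
    · exact Set.mem_insert_iff.mpr (Or.inr ⟨z, hz, (ciSup_pos (f := fun _ => ‖f z‖) hz).symm⟩)
    · left
      haveI : IsEmpty (z ∈ spectrum ℂ M) := ⟨hz⟩
      exact Real.iSup_of_isEmpty _
  have hbdd : BddAbove (Set.range (fun z : ℂ => ⨆ _ : z ∈ spectrum ℂ M, ‖f z‖)) :=
    hK.bddAbove
  have hb : ∀ x ∈ spectrum ℂ M, ‖f x‖ ≤ ⨆ z ∈ spectrum ℂ M, ‖f z‖ := by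
    intro x hx
    calc ‖f x‖ = ⨆ _ : x ∈ spectrum ℂ M, ‖f x‖ := (ciSup_pos (f := fun _ => ‖f x‖) hx).symm
      _ ≤ ⨆ z ∈ spectrum ℂ M, ‖f z‖ := le_ciSup hbdd x
  exact norm_cfc_le (Real.iSup_nonneg fun z => Real.iSup_nonneg fun _ => norm_nonneg _) hb


lemma rank_add_le {m n : ℕ} (A B : Matrix (Fin m) (Fin n) ℂ) :
    (A + B).rank ≤ A.rank + B.rank := by
  rw [Matrix.rank, Matrix.rank, Matrix.rank, Matrix.mulVecLin_add]
  have h : LinearMap.range (A.mulVecLin + B.mulVecLin)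
      ≤ LinearMap.range A.mulVecLin ⊔ LinearMap.range B.mulVecLin := by
    rintro x ⟨v, rfl⟩
    rw [LinearMap.add_apply]
    exact Submodule.add_mem_sup (LinearMap.mem_range_self _ v) (LinearMap.mem_range_self _ v)
  exact le_trans (Submodule.finrank_mono h)
    (Submodule.finrank_add_le_finrank_add_finrank _ _)

lemma rank_smul_le {m n : ℕ} (c : ℂ) (M : Matrix (Fin m) (Fin n) ℂ) :
    (c • M).rank ≤ M.rank := by
  have h : c • M = (c • (1 : Matrix (Fin m) (Fin m) ℂ)) * M := by
    rw [Matrix.smul_mul, Matrix.one_mul]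
  rw [h]
  exact Matrix.rank_mul_le_right _ _

lemma conj_eq {m n : ℕ} {P : Mat m} {Q : Mat n} {Z W : Matrix (Fin m) (Fin n) ℂ}
    (hP : IsUnit P.det) (hQ : IsUnit Q.det) (h : P * Z * Q = W) : Z = P⁻¹ * W * Q⁻¹ := by
  rw [← h]
  calc Z = (P⁻¹ * P) * Z * (Q * Q⁻¹) := by
        rw [Matrix.nonsing_inv_mul _ hP, Matrix.mul_nonsing_inv _ hQ, Matrix.one_mul,
          Matrix.mul_one]
    _ = P⁻¹ * (P * Z * Q) * Q⁻¹ := by simp only [Matrix.mul_assoc]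

lemma one_step {m n : ℕ} (A : Mat m) (B : Mat n) (X F : Matrix (Fin m) (Fin n) ℂ)
    (hX : A * X - X * B = F) (a b : ℂ) (hP : IsUnit (A - b • 1)) (hQ : IsUnit (B - a • 1)) :
    X - ((A - a • 1) * (A - b • 1)⁻¹) * X * ((B - b • 1) * (B - a • 1)⁻¹)
      = (b - a) • ((A - b • 1)⁻¹ * F * (B - a • 1)⁻¹) := by
  have hPd := (Matrix.isUnit_iff_isUnit_det _).mp hP
  have hQd := (Matrix.isUnit_iff_isUnit_det _).mp hQ
  have key : (A - b • 1) * X * (B - a • 1) - (A - a • 1) * X * (B - b • 1) = (b - a) • F := by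
    rw [← hX]
    simp only [Matrix.sub_mul, Matrix.mul_sub, Matrix.smul_mul, Matrix.mul_smul,
      Matrix.one_mul, Matrix.mul_one, smul_smul, smul_sub]
    module
  have h1 : (A - b • 1) * ((A - a • 1) * (A - b • 1)⁻¹) = (A - a • 1) := by
    rw [← Matrix.mul_assoc, (commute_sub_smul A b a).eq, Matrix.mul_assoc,
      Matrix.mul_nonsing_inv _ hPd, Matrix.mul_one]
  have h2 : ((B - b • 1) * (B - a • 1)⁻¹) * (B - a • 1) = (B - b • 1) := by
    rw [Matrix.mul_assoc, Matrix.nonsing_inv_mul _ hQd, Matrix.mul_one]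
  have hT : (A - b • 1) * (((A - a • 1) * (A - b • 1)⁻¹) * X * ((B - b • 1) * (B - a • 1)⁻¹))
      * (B - a • 1) = (A - a • 1) * X * (B - b • 1) := by
    simp only [← Matrix.mul_assoc]
    rw [(commute_sub_smul A b a).eq]
    rw [Matrix.mul_assoc (A - a • 1) (A - b • 1) (A - b • 1)⁻¹,
      Matrix.mul_nonsing_inv _ hPd, Matrix.mul_one]
    rw [Matrix.mul_assoc _ (B - a • 1)⁻¹ (B - a • 1), Matrix.nonsing_inv_mul _ hQd,
      Matrix.mul_one]
  have main : (A - b • 1) *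
      (X - ((A - a • 1) * (A - b • 1)⁻¹) * X * ((B - b • 1) * (B - a • 1)⁻¹)) * (B - a • 1)
      = (b - a) • F := by
    rw [Matrix.mul_sub (A - b • 1) X
        (((A - a • 1) * (A - b • 1)⁻¹) * X * ((B - b • 1) * (B - a • 1)⁻¹)),
      Matrix.sub_mul, hT, key]
  have hZ := conj_eq hPd hQd main
  rw [hZ, Matrix.mul_smul, Matrix.smul_mul]

lemma rank_step {m n : ℕ} (A : Mat m) (B : Mat n) (X F : Matrix (Fin m) (Fin n) ℂ)
    (hX : A * X - X * B = F) (k : ℕ)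
    (hAu : ∀ j < k, IsUnit (A - β j • 1)) (hBu : ∀ j < k, IsUnit (B - α j • 1)) :
    (X - Rp α β A k * X * Rp β α B k).rank ≤ k * F.rank := by
  induction k with
  | zero =>
    simp [Rp]
  | succ t ih =>
    have hA' : ∀ j < t, IsUnit (A - β j • 1) := fun j hj => hAu j (hj.trans t.lt_succ_self)
    have hB' : ∀ j < t, IsUnit (B - α j • 1) := fun j hj => hBu j (hj.trans t.lt_succ_self)
    have hAt := hAu t t.lt_succ_self
    have hBt := hBu t t.lt_succ_self
    set C : Mat m := (A - α t • 1) * (A - β t • 1)⁻¹ with hC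
    set D : Mat n := (B - β t • 1) * (B - α t • 1)⁻¹ with hD
    have hcomm : Commute D (Rp β α B t) := by
      apply Commute.list_prod_right
      intro x hx
      simp only [List.mem_map, List.mem_range] at hx
      obtain ⟨i, hi, rfl⟩ := hx
      exact commute_factor_factor hBt (hBu i (hi.trans t.lt_succ_self))
    have hident : X - Rp α β A (t + 1) * X * Rp β α B (t + 1)
        = (X - Rp α β A t * X * Rp β α B t)
          + Rp α β A t * ((X - C * X * D) * Rp β α B t) := by
      rw [Rp_succ α β A t, Rp_succ β α B t, ← hC, ← hD]
      simp only [Matrix.mul_sub, Matrix.sub_mul, Matrix.mul_assoc]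
      rw [← hcomm.eq]
      abel
    rw [hident]
    have hr1 : (Rp α β A t * ((X - C * X * D) * Rp β α B t)).rank ≤ F.rank := by
      refine le_trans (Matrix.rank_mul_le_right _ _) ?_
      refine le_trans (Matrix.rank_mul_le_left _ _) ?_
      rw [hC, hD, one_step A B X F hX (α t) (β t) hAt hBt]
      refine le_trans (rank_smul_le _ _) ?_
      exact le_trans (Matrix.rank_mul_le_left _ _) (Matrix.rank_mul_le_right _ _)
    calc (X - Rp α β A t * X * Rp β α B t
          + Rp α β A t * ((X - C * X * D) * Rp β α B t)).rank
        ≤ (X - Rp α β A t * X * Rp β α B t).rank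
          + (Rp α β A t * ((X - C * X * D) * Rp β α B t)).rank := rank_add_le _ _
      _ ≤ t * F.rank + F.rank := Nat.add_le_add (ih hA' hB') hr1
      _ = (t + 1) * F.rank := by ring

end ADIAux

/-- **ADI-based singular value bound for normal matrices.**  If `A` and `B` are normal
with disjoint spectra, `rank F = ρ`, `X` solves `AX - XB = F`, and
`r_k(z) = ∏ⱼ (z - αⱼ)/(z - βⱼ)` is a rational function whose poles avoid `λ(A)` and
whose zeros avoid `λ(B)`, then for `kρ < n`,
`σ_{kρ+1}(X) ≤ (sup_{z ∈ λ(A)} |r_k(z)|) (sup_{w ∈ λ(B)} 1/|r_k(w)|) ‖X‖₂`. -/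
theorem adi_singular_value_bound {m n : ℕ} (hmn : n ≤ m) (k ρ : ℕ)
    (A : Matrix (Fin m) (Fin m) ℂ) (B : Matrix (Fin n) (Fin n) ℂ)
    (hA : A * A.conjTranspose = A.conjTranspose * A)
    (hB : B * B.conjTranspose = B.conjTranspose * B)
    (hdisj : spectrum ℂ A ∩ spectrum ℂ B = ∅)
    (F X : Matrix (Fin m) (Fin n) ℂ)
    (hrank : F.rank = ρ)
    (hX : A * X - X * B = F)
    (α β : ℕ → ℂ)
    (hβ : ∀ j < k, β j ∉ spectrum ℂ A)
    (hα : ∀ j < k, α j ∉ spectrum ℂ B)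
    (ht : k * ρ < n) :
    singularValue X (k * ρ + 1) ≤
      (⨆ z ∈ spectrum ℂ A,
          ‖∏ j ∈ Finset.range k, (z - α j) / (z - β j)‖) *
        (⨆ w ∈ spectrum ℂ B,
          ‖∏ j ∈ Finset.range k, (w - α j) / (w - β j)‖⁻¹) *
        specNorm X := by
  have hn : 0 < n := Nat.pos_of_ne_zero (by rintro rfl; exact Nat.not_lt_zero _ ht)
  have hm : 0 < m := lt_of_lt_of_le hn hmn
  have hAn : IsStarNormal A := ⟨by
    show star A * A = A * star A
    rw [Matrix.star_eq_conjTranspose]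
    exact hA.symm⟩
  have hBn : IsStarNormal B := ⟨by
    show star B * B = B * star B
    rw [Matrix.star_eq_conjTranspose]
    exact hB.symm⟩
  have hAu : ∀ j < k, IsUnit (A - β j • 1) := fun j hj => ADIAux.isUnit_sub_smul (hβ j hj)
  have hBu : ∀ j < k, IsUnit (B - α j • 1) := fun j hj => ADIAux.isUnit_sub_smul (hα j hj)
  set R : Matrix (Fin m) (Fin m) ℂ := ADIAux.Rp α β A k with hR
  set S : Matrix (Fin n) (Fin n) ℂ := ADIAux.Rp β α B k with hS
  set N : Matrix (Fin m) (Fin n) ℂ := X - R * X * S with hN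
  -- Eckart–Young step
  have hrk : N.rank ≤ k * ρ := by
    rw [hN, hR, hS, ← hrank]
    exact ADIAux.rank_step α β A B X F hX k hAu hBu
  have hmem : specNorm (X - N) ∈
      ((fun N' : Matrix (Fin m) (Fin n) ℂ => specNorm (X - N')) '' {N' | N'.rank < k * ρ + 1}) :=
    ⟨N, Nat.lt_succ_of_le hrk, rfl⟩
  have hbddB : BddBelow
      ((fun N' : Matrix (Fin m) (Fin n) ℂ => specNorm (X - N')) '' {N' | N'.rank < k * ρ + 1}) := by
    refine ⟨0, ?_⟩
    rintro x ⟨N', -, rfl⟩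
    exact norm_nonneg (X - N')
  have le1 : singularValue X (k * ρ + 1) ≤ specNorm (X - N) := csInf_le hbddB hmem
  have hXN : X - N = R * X * S := by rw [hN, sub_sub_cancel]
  -- norm bounds via cfc
  set cA : ℝ := ⨆ z ∈ spectrum ℂ A, ‖∏ j ∈ Finset.range k, (z - α j) / (z - β j)‖ with hcA
  set cB : ℝ := ⨆ w ∈ spectrum ℂ B, ‖∏ j ∈ Finset.range k, (w - β j) / (w - α j)‖ with hcB
  have hRle : ‖R‖ ≤ cA := by
    rw [hR, ← ADIAux.cfc_eq_Rp α β A hAn hm hβ, hcA]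
    exact ADIAux.norm_cfc_le_biSup A hm _
  have hSle : ‖S‖ ≤ cB := by
    rw [hS, ← ADIAux.cfc_eq_Rp β α B hBn hn hα, hcB]
    exact ADIAux.norm_cfc_le_biSup B hn _
  have hcA0 : 0 ≤ cA := Real.iSup_nonneg fun z => Real.iSup_nonneg fun _ => norm_nonneg _
  have hcB0 : 0 ≤ cB := Real.iSup_nonneg fun w => Real.iSup_nonneg fun _ => norm_nonneg _
  have le2 : specNorm (X - N) ≤ ‖R‖ * ‖X‖ * ‖S‖ := by
    show ‖X - N‖ ≤ _
    rw [hXN]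
    calc ‖R * X * S‖ ≤ ‖R * X‖ * ‖S‖ := Matrix.l2_opNorm_mul _ _
      _ ≤ ‖R‖ * ‖X‖ * ‖S‖ :=
        mul_le_mul_of_nonneg_right (Matrix.l2_opNorm_mul _ _) (norm_nonneg _)
  have le3 : ‖R‖ * ‖X‖ * ‖S‖ ≤ cA * ‖X‖ * cB := by
    have h1 : ‖R‖ * ‖X‖ ≤ cA * ‖X‖ :=
      mul_le_mul_of_nonneg_right hRle (norm_nonneg _)
    exact mul_le_mul h1 hSle (norm_nonneg _) (by positivity)
  -- identify the stated suprema
  have hAsup : (⨆ z ∈ spectrum ℂ A,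
      ‖∏ j ∈ Finset.range k, (z - α j) / (z - β j)‖) = cA := by
    rw [hcA]
  have hBsup : (⨆ w ∈ spectrum ℂ B,
      ‖∏ j ∈ Finset.range k, (w - α j) / (w - β j)‖⁻¹) = cB := by
    rw [hcB]
    refine iSup_congr fun w => iSup_congr fun _ => ?_
    rw [← norm_inv, ← Finset.prod_inv_distrib]
    exact congrArg norm (Finset.prod_congr rfl fun j _ => inv_div _ _)
  rw [hBsup]
  have : specNorm X = ‖X‖ := rfl
  rw [this]
  calc singularValue X (k * ρ + 1) ≤ specNorm (X - N) := le1
    _ ≤ ‖R‖ * ‖X‖ * ‖S‖ := le2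
    _ ≤ cA * ‖X‖ * cB := le3
    _ = cA * cB * ‖X‖ := by ring
end

section
/- Optimality of the Zolotarev number for two disks: Let E = {z ∈ ℂ : |z − z₀| ≤ η} with z₀, η ∈ ℝ and 0 < η < z₀, let −E = {−z : z ∈ E}, let φ = √(z₀² − η²), and let μ₁ = (z₀ + φ)/(z₀ − φ). For every pair of complex polynomials p, q of degree at most k, there exist points z ∈ E and w ∈ −E such that |p(z)| · |q(w)| ≥ μ₁^{−k} · |q(z)| · |p(w)|. (Equivalently, no rational function of type (k, k) can achieve a ratio sup_E |r| / inf_{−E} |r| smaller than μ₁^{−k}.) -/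
open Polynomial

private lemma zol_maxmod (B : Polynomial ℂ) (r : ℝ) (hr : 0 < r) :
    ∃ v : ℂ, ‖v‖ = r ∧
      ∀ w : ℂ, ‖w‖ ≤ r → ‖B.eval w‖ ≤ ‖B.eval v‖ := by
  obtain ⟨v, hv, hmax⟩ := (isCompact_sphere (0:ℂ) r).exists_isMaxOn
    (NormedSpace.sphere_nonempty.2 hr.le)
    ((B.continuous.norm).continuousOn)
  refine ⟨v, by simpa [mem_sphere_zero_iff_norm] using hv, ?_⟩
  intro w hw
  have hcl : w ∈ closure (Metric.ball (0:ℂ) r) := by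
    rw [closure_ball (0:ℂ) hr.ne']
    simpa [mem_closedBall_zero_iff] using hw
  have h2 : ‖B.eval w‖ ≤ ‖B.eval v‖ := by
    refine Complex.norm_le_of_forall_mem_frontier_norm_le (Metric.isBounded_ball)
      (B.differentiable.diffContOnCl) (fun x hx => ?_) hcl
    rw [frontier_ball (0:ℂ) hr.ne'] at hx
    exact hmax hx
  simpa using h2

private lemma zol_key2 (ρ : ℝ) (hρ0 : 0 < ρ) (hρ1 : ρ < 1) (φ : ℝ) (f : Polynomial ℂ) :
    ∃ u : ℂ, ‖u‖ = ρ ∧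
      ρ ^ f.natDegree * ‖f.eval (-((φ : ℂ) * (1 + u) / (1 - u)))‖ ≤
        ‖f.eval ((φ : ℂ) * (1 + u) / (1 - u))‖ := by
  have habsρ : ‖(ρ : ℂ)‖ = ρ := by
    simp [Complex.norm_real, abs_of_pos hρ0]
  by_cases hf : f = 0
  · exact ⟨(ρ : ℂ), habsρ, by simp [hf]⟩
  set M := f.roots with hM
  have hsplit : Splits f := IsAlgClosed.splits f
  have hn : Multiset.card M = f.natDegree := (splits_iff_card_roots).1 hsplit
  set c := f.leadingCoeff with hc
  have hev : ∀ x : ℂ, f.eval x = c * (M.map fun a => x - a).prod := by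
    intro x
    conv_lhs => rw [hsplit.eq_prod_roots]
    rw [eval_mul, eval_C, eval_multiset_prod, Multiset.map_map]
    simp [Function.comp, hc, hM]
  set B : Polynomial ℂ := (M.map fun a => C ((φ:ℂ) + a) + C ((φ:ℂ) - a) * X).prod with hB
  have hBev : ∀ w : ℂ, B.eval w = (M.map fun a => ((φ:ℂ) + a) + ((φ:ℂ) - a) * w).prod := by
    intro w
    rw [hB, eval_multiset_prod, Multiset.map_map]
    simp [Function.comp]
  obtain ⟨v, hv, hvmax⟩ := zol_maxmod B ρ⁻¹ (by positivity)
  have hv0 : v ≠ 0 := by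
    intro h
    rw [h] at hv
    simp at hv
    exact absurd hv.symm (by positivity)
  set u := v⁻¹ with hudef
  have huv : u⁻¹ = v := inv_inv v
  have hu : ‖u‖ = ρ := by rw [hudef, norm_inv, hv, inv_inv]
  have hu0 : u ≠ 0 := inv_ne_zero hv0
  have h1u : (1 : ℂ) - u ≠ 0 := by
    intro h
    have h1 : u = 1 := by linear_combination -h
    rw [h1] at hu
    simp at hu
    exact hρ1.ne' hu
  set z := (φ : ℂ) * (1 + u) / (1 - u) with hzdef
  refine ⟨u, hu, ?_⟩
  have hz1 : z * (1 - u) = (φ : ℂ) * (1 + u) := by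
    rw [hzdef]; field_simp
  set n := f.natDegree with hndef
  have hconstprod : ∀ x : ℂ, (M.map fun _ => x).prod = x ^ n := by
    intro x
    rw [Multiset.map_const', Multiset.prod_replicate, hn]
  have hAz : (M.map fun a => z - a).prod * (1 - u) ^ n
      = (M.map fun a => ((φ:ℂ) - a) + ((φ:ℂ) + a) * u).prod := by
    rw [← hconstprod (1 - u), ← Multiset.prod_map_mul]
    exact congrArg Multiset.prod (Multiset.map_congr rfl fun a _ => by linear_combination hz1)
  have hBz : (M.map fun a => -z - a).prod * (1 - u) ^ n
      = (M.map fun a => -(((φ:ℂ) + a) + ((φ:ℂ) - a) * u)).prod := by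
    rw [← hconstprod (1 - u), ← Multiset.prod_map_mul]
    exact congrArg Multiset.prod (Multiset.map_congr rfl fun a _ => by linear_combination -hz1)
  have hrev : (M.map fun a => ((φ:ℂ) - a) + ((φ:ℂ) + a) * u).prod
      = u ^ n * B.eval u⁻¹ := by
    rw [hBev, ← hconstprod u, ← Multiset.prod_map_mul]
    refine congrArg Multiset.prod (Multiset.map_congr rfl fun a _ => ?_)
    field_simp
    ring
  have hfz : f.eval z * (1 - u) ^ n = c * (u ^ n * B.eval u⁻¹) := by
    rw [hev z, mul_assoc, hAz, hrev]
  have hfnz : f.eval (-z) * (1 - u) ^ n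
      = c * (M.map fun a => -(((φ:ℂ) + a) + ((φ:ℂ) - a) * u)).prod := by
    rw [hev (-z), mul_assoc, hBz]
  have habsneg : ‖(M.map fun a => -(((φ:ℂ) + a) + ((φ:ℂ) - a) * u)).prod‖
      = ‖B.eval u‖ := by
    have hm := fun s : Multiset ℂ => map_multiset_prod (normHom : ℂ →*₀ ℝ) s
    simp only [normHom_apply] at hm
    rw [hBev, hm, hm, Multiset.map_map, Multiset.map_map]
    exact congrArg Multiset.prod (Multiset.map_congr rfl fun a _ => by
      show ‖-(((φ:ℂ) + a) + ((φ:ℂ) - a) * u)‖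
          = ‖((φ:ℂ) + a) + ((φ:ℂ) - a) * u‖
      exact norm_neg _)
  have habs1 : ‖f.eval z‖ * ‖1 - u‖ ^ n
      = ‖c‖ * (ρ ^ n * ‖B.eval v‖) := by
    have := congrArg (‖·‖) hfz
    rw [norm_mul, norm_pow, norm_mul, norm_mul, norm_pow, hu, huv] at this
    exact this
  have habs2 : ‖f.eval (-z)‖ * ‖1 - u‖ ^ n
      = ‖c‖ * ‖B.eval u‖ := by
    have := congrArg (‖·‖) hfnz
    rw [norm_mul, norm_pow, norm_mul, habsneg] at this
    exact this
  have hb : ‖B.eval u‖ ≤ ‖B.eval v‖ := by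
    refine hvmax u ?_
    rw [hu]
    have h1 : ρ * ρ⁻¹ = 1 := mul_inv_cancel₀ hρ0.ne'
    nlinarith [inv_pos.2 hρ0]
  have hpos : 0 < ‖1 - u‖ ^ n := by
    have := norm_pos_iff.2 h1u
    positivity
  have key : ρ ^ n * ‖f.eval (-z)‖ * ‖1 - u‖ ^ n
      ≤ ‖f.eval z‖ * ‖1 - u‖ ^ n := by
    rw [mul_assoc, habs2, habs1]
    calc ρ ^ n * (‖c‖ * ‖B.eval u‖)
        ≤ ρ ^ n * (‖c‖ * ‖B.eval v‖) := by gcongr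
      _ = ‖c‖ * (ρ ^ n * ‖B.eval v‖) := by ring
  exact le_of_mul_le_mul_right key hpos

set_option maxHeartbeats 1000000 in
/-- **Optimality of the Zolotarev number for two disks.**
For the disk `E = {z : |z - z₀| ≤ η}` with `0 < η < z₀`, `φ = √(z₀² - η²)` and
`μ₁ = (z₀ + φ)/(z₀ - φ)`: for every pair of complex polynomials `p, q` of degree at
most `k` there exist `z ∈ E` and `w ∈ -E` with
`|p(z)|·|q(w)| ≥ μ₁^{-k}·|q(z)|·|p(w)|`. -/
theorem zolotarev_two_disks_optimal (z₀ η : ℝ) (hη : 0 < η) (hz : η < z₀)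
    (φ : ℝ) (hφ : φ = Real.sqrt (z₀ ^ 2 - η ^ 2))
    (μ₁ : ℝ) (hμ : μ₁ = (z₀ + φ) / (z₀ - φ)) (k : ℕ)
    (p q : Polynomial ℂ) (hp : p.natDegree ≤ k) (hq : q.natDegree ≤ k) :
    ∃ z w : ℂ, ‖z - (z₀ : ℂ)‖ ≤ η ∧ ‖-w - (z₀ : ℂ)‖ ≤ η ∧
      (μ₁ ^ k)⁻¹ * (‖q.eval z‖ * ‖p.eval w‖) ≤
        ‖p.eval z‖ * ‖q.eval w‖ := by
  have hz0 : 0 < z₀ := hη.trans hz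
  have hφ2 : φ ^ 2 = z₀ ^ 2 - η ^ 2 := by
    rw [hφ]; exact Real.sq_sqrt (by nlinarith)
  have hφ0 : 0 < φ := by
    rw [hφ]; exact Real.sqrt_pos.2 (by nlinarith)
  have hφz : φ < z₀ := by nlinarith
  set ρ : ℝ := η / (z₀ + φ) with hρ
  have hρ0 : 0 < ρ := div_pos hη (by positivity)
  have hρ1 : ρ < 1 := by
    rw [hρ, div_lt_one (by positivity)]; nlinarith
  have hρη : (z₀ + φ) ^ 2 * ρ ^ 2 = η ^ 2 := by
    rw [hρ]; field_simp
  have hμρ : μ₁ * ρ ^ 2 = 1 := by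
    rw [hμ, hρ, div_pow, div_mul_div_comm]
    rw [div_eq_one_iff_eq (ne_of_gt (mul_pos (by nlinarith) (by positivity)))]
    nlinarith
  have hμinv : (μ₁ ^ k)⁻¹ = ρ ^ (2 * k) := by
    refine inv_eq_of_mul_eq_one_right ?_
    rw [pow_mul, ← mul_pow, hμρ, one_pow]
  set f := p * q.comp (-X) with hfdef
  obtain ⟨u, hu, hineq⟩ := zol_key2 ρ hρ0 hρ1 φ f
  have hu2 : u.re ^ 2 + u.im ^ 2 = ρ ^ 2 := by
    have h := Complex.sq_norm u
    rw [hu, Complex.normSq_apply] at h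
    nlinarith
  have h1u : (1 : ℂ) - u ≠ 0 := by
    intro h
    have h1 : u = 1 := by linear_combination -h
    rw [h1] at hu
    simp at hu
    exact hρ1.ne' hu
  set z := (φ : ℂ) * (1 + u) / (1 - u) with hzdef
  have hz1 : z * (1 - u) = (φ : ℂ) * (1 + u) := by
    rw [hzdef]; field_simp
  -- membership : |z - z₀| ≤ η
  have hkey : (z - (z₀ : ℂ)) * (1 - u) = ((φ : ℂ) - z₀) + ((φ : ℂ) + z₀) * u := by
    linear_combination hz1
  have habs : ‖z - (z₀ : ℂ)‖ * ‖1 - u‖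
      = ‖((φ : ℂ) - z₀) + ((φ : ℂ) + z₀) * u‖ := by
    rw [← norm_mul, hkey]
  have hu2' : (u.re ^ 2 + u.im ^ 2) * (z₀ + φ) ^ 2 = η ^ 2 := by
    rw [hu2]; linear_combination hρη
  have hzφ : (z₀ + φ) ≠ 0 := ne_of_gt (by positivity)
  have hsqm : ‖((φ : ℂ) - z₀) + ((φ : ℂ) + z₀) * u‖ ^ 2 * (z₀ + φ) ^ 2
      = η ^ 2 * ‖1 - u‖ ^ 2 * (z₀ + φ) ^ 2 := by
    rw [Complex.sq_norm, Complex.sq_norm, Complex.normSq_apply, Complex.normSq_apply]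
    simp only [Complex.add_re, Complex.add_im, Complex.sub_re, Complex.sub_im,
      Complex.mul_re, Complex.mul_im, Complex.ofReal_re, Complex.ofReal_im,
      Complex.one_re, Complex.one_im]
    linear_combination (2 * u.re * (z₀ + φ) ^ 2 + φ ^ 2 - z₀ ^ 2 - η ^ 2) * hφ2
      + ((z₀ + φ) ^ 2 - η ^ 2) * hu2'
  have hsq : ‖((φ : ℂ) - z₀) + ((φ : ℂ) + z₀) * u‖ ^ 2
      = η ^ 2 * ‖1 - u‖ ^ 2 :=
    mul_right_cancel₀ (pow_ne_zero 2 hzφ) hsqm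
  have habspos : 0 < ‖1 - u‖ := norm_pos_iff.2 h1u
  have h1 : ‖z - (z₀ : ℂ)‖ ^ 2 * ‖1 - u‖ ^ 2
      = η ^ 2 * ‖1 - u‖ ^ 2 := by
    calc ‖z - (z₀ : ℂ)‖ ^ 2 * ‖1 - u‖ ^ 2
        = (‖z - (z₀ : ℂ)‖ * ‖1 - u‖) ^ 2 := by ring
      _ = ‖((φ : ℂ) - z₀) + ((φ : ℂ) + z₀) * u‖ ^ 2 := by rw [habs]
      _ = η ^ 2 * ‖1 - u‖ ^ 2 := hsq
  have h2 : ‖z - (z₀ : ℂ)‖ ^ 2 = η ^ 2 :=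
    mul_right_cancel₀ (pow_ne_zero 2 habspos.ne') h1
  have hmem : ‖z - (z₀ : ℂ)‖ ≤ η := by
    nlinarith [norm_nonneg (z - (z₀ : ℂ))]
  -- evaluation identities
  have hev1 : f.eval z = p.eval z * q.eval (-z) := by
    rw [hfdef]; simp [eval_comp]
  have hev2 : f.eval (-z) = p.eval (-z) * q.eval z := by
    rw [hfdef]; simp [eval_comp]
  have hdeg : f.natDegree ≤ 2 * k := by
    refine le_trans (natDegree_mul_le) ?_
    have h2 : (q.comp (-X)).natDegree ≤ q.natDegree := by
      refine le_trans (natDegree_comp_le) ?_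
      simp [natDegree_neg, natDegree_X]
    omega
  have hρk : ρ ^ (2 * k) ≤ ρ ^ f.natDegree := pow_le_pow_of_le_one hρ0.le hρ1.le hdeg
  refine ⟨z, -z, hmem, by simpa using hmem, ?_⟩
  rw [hμinv]
  calc ρ ^ (2 * k) * (‖q.eval z‖ * ‖p.eval (-z)‖)
      = ρ ^ (2 * k) * ‖f.eval (-z)‖ := by rw [hev2, norm_mul]; ring
    _ ≤ ρ ^ f.natDegree * ‖f.eval (-z)‖ := mul_le_mul_of_nonneg_right hρk (norm_nonneg _)
    _ ≤ ‖f.eval z‖ := hineq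
    _ = ‖p.eval z‖ * ‖q.eval (-z)‖ := by rw [hev1, norm_mul]
end

section
/- Norm bound for solutions of Sylvester equations with spectra in opposite disks: Let E = {z ∈ ℂ : |z − z₀| ≤ η} with z₀, η ∈ ℝ and 0 < η < z₀, and let −E = {−z : z ∈ E}. Let A ∈ ℂ^{m×m} and B ∈ ℂ^{n×n} be normal matrices with all eigenvalues of A in E and all eigenvalues of B in −E, and suppose X ∈ ℂ^{m×n} satisfies AX − XB = F. Then ‖X‖₂ ≤ ‖F‖₂ / (2(z₀ − η)). -/
open scoped Matrix.Norms.L2Operator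
open Pointwise

/-- The matrices over `ℂ` with the `L2` operator norm form a C⋆-algebra. -/
noncomputable instance matCStarAux {k : ℕ} : CStarAlgebra (Matrix (Fin k) (Fin k) ℂ) :=
  { Matrix.instL2OpNormedRing, Matrix.instL2OpNormedAlgebra (n := Fin k) (𝕜 := ℂ),
    Matrix.instCStarRing (n := Fin k) (𝕜 := ℂ),
    (inferInstance : StarRing (Matrix (Fin k) (Fin k) ℂ)),
    (inferInstance : StarModule ℂ (Matrix (Fin k) (Fin k) ℂ)),
    (FiniteDimensional.complete ℂ (Matrix (Fin k) (Fin k) ℂ) : CompleteSpace _) with }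

/-- For a normal matrix, the `L2` operator norm of `N - c•1` is bounded by the radius of any
disk centered at `c` containing the spectrum of `N`. -/
lemma norm_sub_scalar_le_aux {k : ℕ} (N : Matrix (Fin k) (Fin k) ℂ)
    (hN : N * N.conjTranspose = N.conjTranspose * N) (c : ℂ) (r : ℝ) (hr : 0 ≤ r)
    (h : ∀ z ∈ spectrum ℂ N, ‖z - c‖ ≤ r) :
    ‖N - algebraMap ℂ _ c‖ ≤ r := by
  set s := algebraMap ℂ (Matrix (Fin k) (Fin k) ℂ) c with hs
  have hnormal : IsStarNormal (N - s) := by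
    constructor
    have c1 : Commute (star N) N := by
      rw [Commute, SemiconjBy, Matrix.star_eq_conjTranspose, hN]
    have hstars : star s = algebraMap ℂ (Matrix (Fin k) (Fin k) ℂ) (starRingEnd ℂ c) := by
      rw [hs, Algebra.algebraMap_eq_smul_one, Algebra.algebraMap_eq_smul_one, star_smul, star_one]
      rfl
    rw [star_sub]
    exact (c1.sub_left (hstars ▸ Algebra.commute_algebraMap_left _ N)).sub_right
      ((Commute.symm (Algebra.commute_algebraMap_left c (star N))).sub_left
        (hstars ▸ Algebra.commute_algebraMap_left _ s))
  have hrad := IsStarNormal.spectralRadius_eq_nnnorm (N - s)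
  have hspec : spectrum ℂ (N - s) = spectrum ℂ N - {c} := (spectrum.sub_singleton_eq N c).symm
  have hle : spectralRadius ℂ (N - s) ≤ (r.toNNReal : ENNReal) := by
    rw [spectralRadius]
    refine iSup₂_le fun z hz => ?_
    rw [hspec, Set.sub_singleton] at hz
    obtain ⟨w, hw, rfl⟩ := hz
    have := h w hw
    simp only [ENNReal.coe_le_coe, ← NNReal.coe_le_coe, coe_nnnorm, Real.coe_toNNReal r hr]
    exact_mod_cast this
  rw [hrad] at hle
  have := ENNReal.coe_le_coe.mp hle
  calc ‖N - s‖ = ((‖N - s‖₊ : NNReal) : ℝ) := rfl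
    _ ≤ ((r.toNNReal : NNReal) : ℝ) := by exact_mod_cast this
    _ = r := Real.coe_toNNReal r hr

lemma specNorm_eq_norm {m n : ℕ} (M : Matrix (Fin m) (Fin n) ℂ) : specNorm M = ‖M‖ := rfl

/-- **Norm bound for solutions of Sylvester equations with spectra in opposite disks.**
If `A` and `B` are normal with `λ(A) ⊆ E = {z : |z - z₀| ≤ η}` and `λ(B) ⊆ -E`
(`0 < η < z₀`), and `AX - XB = F`, then `‖X‖₂ ≤ ‖F‖₂ / (2(z₀ - η))`. -/
theorem sylvester_norm_bound_opposite_disks {m n : ℕ} (z₀ η : ℝ)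
    (hη : 0 < η) (hz : η < z₀)
    (A : Matrix (Fin m) (Fin m) ℂ) (B : Matrix (Fin n) (Fin n) ℂ)
    (hA : A * A.conjTranspose = A.conjTranspose * A)
    (hB : B * B.conjTranspose = B.conjTranspose * B)
    (hspecA : spectrum ℂ A ⊆ {z : ℂ | ‖z - (z₀ : ℂ)‖ ≤ η})
    (hspecB : spectrum ℂ B ⊆ {z : ℂ | ‖-z - (z₀ : ℂ)‖ ≤ η})
    (F X : Matrix (Fin m) (Fin n) ℂ)
    (hX : A * X - X * B = F) :
    specNorm X ≤ specNorm F / (2 * (z₀ - η)) := by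
  set A' := A - algebraMap ℂ (Matrix (Fin m) (Fin m) ℂ) (z₀ : ℂ) with hA'def
  set B' := B - algebraMap ℂ (Matrix (Fin n) (Fin n) ℂ) (-(z₀ : ℂ)) with hB'def
  have hA' : ‖A'‖ ≤ η :=
    norm_sub_scalar_le_aux A hA (z₀ : ℂ) η hη.le fun z hz => hspecA hz
  have hB' : ‖B'‖ ≤ η := by
    refine norm_sub_scalar_le_aux B hB (-(z₀ : ℂ)) η hη.le fun z hz => ?_
    have h0 := hspecB hz
    have : ‖z - -(z₀:ℂ)‖ = ‖-z - (z₀:ℂ)‖ := by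
      rw [show z - -(z₀:ℂ) = -(-z - (z₀:ℂ)) by ring, norm_neg]
    rw [this]
    exact h0
  -- key identity
  have key : ((2 * z₀ : ℝ) : ℂ) • X = F - A' * X + X * B' := by
    rw [hA'def, hB'def, ← hX]
    rw [Algebra.algebraMap_eq_smul_one, Algebra.algebraMap_eq_smul_one,
      Matrix.sub_mul, Matrix.mul_sub, Matrix.smul_mul, Matrix.mul_smul,
      Matrix.one_mul, Matrix.mul_one]
    push_cast
    module
  have hnorm2 : ‖((2 * z₀ : ℝ) : ℂ) • X‖ = (2 * z₀) * ‖X‖ := by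
    rw [norm_smul, Complex.norm_real, Real.norm_of_nonneg (by linarith)]
  have htri : ‖F - A' * X + X * B'‖ ≤ ‖F‖ + ‖A'‖ * ‖X‖ + ‖X‖ * ‖B'‖ := by
    calc ‖F - A' * X + X * B'‖ ≤ ‖F - A' * X‖ + ‖X * B'‖ := norm_add_le _ _
      _ ≤ ‖F‖ + ‖A' * X‖ + ‖X * B'‖ := by
          have := norm_sub_le F (A' * X); linarith
      _ ≤ ‖F‖ + ‖A'‖ * ‖X‖ + ‖X‖ * ‖B'‖ := by
          have h1 := Matrix.l2_opNorm_mul A' X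
          have h2 := Matrix.l2_opNorm_mul X B'
          linarith
  have hXnn : (0:ℝ) ≤ ‖X‖ := norm_nonneg _
  have hmain : (2 * z₀) * ‖X‖ ≤ ‖F‖ + η * ‖X‖ + η * ‖X‖ := by
    rw [← hnorm2, key]
    have hA'X : ‖A'‖ * ‖X‖ ≤ η * ‖X‖ := mul_le_mul_of_nonneg_right hA' hXnn
    have hXB' : ‖X‖ * ‖B'‖ ≤ ‖X‖ * η := mul_le_mul_of_nonneg_left hB' hXnn
    nlinarith [htri]
  rw [specNorm_eq_norm, specNorm_eq_norm, le_div_iff₀ (by linarith : (0:ℝ) < 2 * (z₀ - η))]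
  nlinarith [hmain]
end

section
/- Geometric decay of the singular values of a Cauchy matrix with nodes in opposite disks: Let E = {z ∈ ℂ : |z − z₀| ≤ η} with z₀, η ∈ ℝ and 0 < η < z₀, let φ = √(z₀² − η²), and let μ₁ = (z₀ + φ)/(z₀ − φ). Let C ∈ ℂ^{m×n} (m ≥ n) be the Cauchy matrix with entries C_{ij} = 1/(z_i − w_j), where z_1, …, z_m ∈ E and w_1, …, w_n ∈ −E = {−z : z ∈ E}. Then for all 0 ≤ k < n, σ_{k+1}(C) ≤ μ₁^{−k} ‖C‖₂. -/
open Finset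
open scoped Matrix.Norms.L2Operator

lemma diag_opNorm_le {n : ℕ} (d : Fin n → ℂ) {c : ℝ} (hc : 0 ≤ c) (h : ∀ i, ‖d i‖ ≤ c) :
    ‖(Matrix.diagonal d : Matrix (Fin n) (Fin n) ℂ)‖ ≤ c := by
  rw [Matrix.l2_opNorm_def]
  refine ContinuousLinearMap.opNorm_le_bound _ hc fun x => ?_
  have h1 : (LinearEquiv.trans Matrix.toEuclideanLin LinearMap.toContinuousLinearMap
      (Matrix.diagonal d)) x = (WithLp.equiv 2 (Fin n → ℂ)).symm (fun i => d i * x i) := by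
    simp only [LinearEquiv.trans_apply, LinearMap.coe_toContinuousLinearMap']
    rw [Matrix.toEuclideanLin_apply]
    congr 1
    funext i
    rw [Matrix.mulVec_diagonal]
  rw [h1, EuclideanSpace.norm_eq, EuclideanSpace.norm_eq, ← Real.sqrt_sq hc,
    ← Real.sqrt_mul (by positivity)]
  apply Real.sqrt_le_sqrt
  rw [Finset.mul_sum]
  apply Finset.sum_le_sum
  intro i _
  have h2 : ((WithLp.equiv 2 (Fin n → ℂ)).symm (fun i => d i * x i)) i = d i * x i := rfl
  rw [h2, norm_mul, mul_pow]
  have h3 : ‖d i‖ ^ 2 ≤ c ^ 2 := by nlinarith [norm_nonneg (d i), h i]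
  nlinarith [norm_nonneg (x i), sq_nonneg (‖x i‖)]

lemma key_ineq {z₀ η φ τ : ℝ} (hη : 0 < η) (hz : η < z₀)
    (hφsq : φ ^ 2 = z₀ ^ 2 - η ^ 2) (hφpos : 0 < φ) (hφlt : φ < z₀)
    (hτ : τ = Real.sqrt ((z₀ - φ) / (z₀ + φ)))
    {u : ℂ} (hu : ‖u - (z₀ : ℂ)‖ ≤ η) :
    ‖u - (φ : ℂ)‖ ≤ τ * ‖u + (φ : ℂ)‖ := by
  have hz0 : 0 < z₀ := hη.trans hz
  have hs0 : (0:ℝ) ≤ (z₀ - φ) / (z₀ + φ) := div_nonneg (by linarith) (by linarith)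
  have hτ0 : 0 ≤ τ := by rw [hτ]; exact Real.sqrt_nonneg _
  have hτsq : τ ^ 2 * (z₀ + φ) = z₀ - φ := by
    rw [hτ, Real.sq_sqrt hs0]; field_simp
  have h1 : (u.re - z₀) ^ 2 + u.im ^ 2 ≤ η ^ 2 := by
    have h2 : ‖u - (z₀:ℂ)‖ ^ 2 ≤ η ^ 2 := by
      nlinarith [norm_nonneg (u - (z₀:ℂ))]
    rw [Complex.sq_norm, Complex.normSq_apply] at h2
    simp only [Complex.sub_re, Complex.sub_im, Complex.ofReal_re, Complex.ofReal_im,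
      sub_zero] at h2
    nlinarith [h2]
  have hA : ‖u - (φ:ℂ)‖ ^ 2 = (u.re - φ) ^ 2 + u.im ^ 2 := by
    rw [Complex.sq_norm, Complex.normSq_apply]
    simp only [Complex.sub_re, Complex.sub_im, Complex.ofReal_re, Complex.ofReal_im, sub_zero]
    ring
  have hB : ‖u + (φ:ℂ)‖ ^ 2 = (u.re + φ) ^ 2 + u.im ^ 2 := by
    rw [Complex.sq_norm, Complex.normSq_apply]
    simp only [Complex.add_re, Complex.add_im, Complex.ofReal_re, Complex.ofReal_im, add_zero]
    ring
  set A := ‖u - (φ:ℂ)‖ with hAdef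
  set B := ‖u + (φ:ℂ)‖ with hBdef
  have hA0 : 0 ≤ A := norm_nonneg _
  have hB0 : 0 ≤ B := norm_nonneg _
  have step1 : A ^ 2 * (z₀ + φ) ≤ B ^ 2 * (z₀ - φ) := by nlinarith [h1, hφpos]
  have step2 : A ^ 2 ≤ τ ^ 2 * B ^ 2 := by nlinarith [step1, hτsq, sq_nonneg B]
  calc A = Real.sqrt (A ^ 2) := (Real.sqrt_sq hA0).symm
    _ ≤ Real.sqrt (τ ^ 2 * B ^ 2) := Real.sqrt_le_sqrt step2
    _ = τ * B := by
        rw [Real.sqrt_mul (sq_nonneg τ), Real.sqrt_sq hτ0, Real.sqrt_sq hB0]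

lemma cauchy_identity (k : ℕ) (F Z W : ℂ) (hF : F ≠ 0) (hZW : Z - W ≠ 0)
    (hZF : Z + F ≠ 0) (hWF : W - F ≠ 0) :
    (Z - W)⁻¹ - ∑ l ∈ range k,
        ((-2 * F) * (Z - F) ^ l / (Z + F) ^ (l + 1)) * ((W + F) ^ l / (W - F) ^ (l + 1))
      = ((Z - F) / (Z + F)) ^ k * (Z - W)⁻¹ * ((W + F) / (W - F)) ^ k := by
  set r : ℂ := ((Z - F) * (W + F)) / ((Z + F) * (W - F)) with hr
  have hB : (Z + F) * (W - F) ≠ 0 := mul_ne_zero hZF hWF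
  have hAB : (Z - F) * (W + F) - (Z + F) * (W - F) ≠ 0 := by
    have h : (Z - F) * (W + F) - (Z + F) * (W - F) = 2 * F * (Z - W) := by ring
    rw [h]
    exact mul_ne_zero (mul_ne_zero two_ne_zero hF) hZW
  have hr1 : r ≠ 1 := by
    rw [hr]
    intro h
    rw [div_eq_one_iff_eq hB] at h
    exact hAB (sub_eq_zero_of_eq h)
  have hsum : ∀ l ∈ range k,
      ((-2 * F) * (Z - F) ^ l / (Z + F) ^ (l + 1)) * ((W + F) ^ l / (W - F) ^ (l + 1))
        = ((-2 * F) / ((Z + F) * (W - F))) * r ^ l := by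
    intro l _
    rw [hr, div_pow, mul_pow, mul_pow]
    field_simp
    ring
  have h4 : r - 1 = (2 * F * (Z - W)) / ((Z + F) * (W - F)) := by
    rw [hr, div_sub_one hB]
    congr 1
    ring
  have h5 : ((-2 * F) / ((Z + F) * (W - F))) * ((r ^ k - 1) / (r - 1))
      = (1 - r ^ k) * (Z - W)⁻¹ := by
    rw [h4]
    have h2F : (2 : ℂ) * F * (Z - W) ≠ 0 := mul_ne_zero (mul_ne_zero two_ne_zero hF) hZW
    field_simp
    ring
  have hr' : r = ((Z - F) / (Z + F)) * ((W + F) / (W - F)) := by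
    rw [hr, div_mul_div_comm]
  rw [Finset.sum_congr rfl hsum, ← Finset.mul_sum, geom_sum_eq hr1, h5, hr', mul_pow]
  ring

/-- **Geometric decay of the singular values of a Cauchy matrix with nodes in opposite
disks.**  If `C_{ij} = 1/(zᵢ - wⱼ)` with `zᵢ ∈ E = {z : |z - z₀| ≤ η}`, `wⱼ ∈ -E`
(`0 < η < z₀`, `m ≥ n`), `φ = √(z₀² - η²)`, `μ₁ = (z₀ + φ)/(z₀ - φ)`, then
`σ_{k+1}(C) ≤ μ₁^{-k} ‖C‖₂` for all `0 ≤ k < n`. -/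
theorem cauchy_singular_value_decay {m n : ℕ} (hmn : n ≤ m) (z₀ η : ℝ)
    (hη : 0 < η) (hz : η < z₀)
    (φ : ℝ) (hφ : φ = Real.sqrt (z₀ ^ 2 - η ^ 2))
    (μ₁ : ℝ) (hμ : μ₁ = (z₀ + φ) / (z₀ - φ))
    (z : Fin m → ℂ) (w : Fin n → ℂ)
    (hzE : ∀ i, ‖z i - (z₀ : ℂ)‖ ≤ η)
    (hwE : ∀ j, ‖-(w j) - (z₀ : ℂ)‖ ≤ η)
    (C : Matrix (Fin m) (Fin n) ℂ) (hC : ∀ i j, C i j = (z i - w j)⁻¹) :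
    ∀ k < n, singularValue C (k + 1) ≤ (μ₁ ^ k)⁻¹ * specNorm C := by
  intro k hk
  have hz0 : 0 < z₀ := hη.trans hz
  have hφpos : 0 < φ := by
    rw [hφ]; exact Real.sqrt_pos.mpr (by nlinarith)
  have hφsq : φ ^ 2 = z₀ ^ 2 - η ^ 2 := by
    rw [hφ]; exact Real.sq_sqrt (by nlinarith)
  have hφlt : φ < z₀ := by nlinarith
  have hτdef : Real.sqrt ((z₀ - φ) / (z₀ + φ)) = Real.sqrt ((z₀ - φ) / (z₀ + φ)) := rfl
  set τ : ℝ := Real.sqrt ((z₀ - φ) / (z₀ + φ)) with hτ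
  have hτ0 : 0 ≤ τ := Real.sqrt_nonneg _
  have hτsq : τ ^ 2 = (z₀ - φ) / (z₀ + φ) :=
    Real.sq_sqrt (div_nonneg (by linarith) (by linarith))
  -- real parts
  have hreE : ∀ u : ℂ, ‖u - (z₀:ℂ)‖ ≤ η → 0 < u.re := by
    intro u hu
    have h1 : |(u - (z₀:ℂ)).re| ≤ ‖u - (z₀:ℂ)‖ := Complex.abs_re_le_norm _
    have h2 : |u.re - z₀| ≤ η := by
      simpa using h1.trans hu
    have h3 := abs_le.mp h2
    linarith [h3.1]
  have hzre : ∀ i, 0 < (z i).re := fun i => hreE _ (hzE i)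
  have hwre : ∀ j, (w j).re < 0 := by
    intro j
    have h := hreE _ (hwE j)
    simp only [Complex.neg_re] at h
    linarith
  set F : ℂ := (φ : ℂ) with hFdef
  have hFne : F ≠ 0 := by
    rw [hFdef]
    exact_mod_cast Complex.ofReal_ne_zero.mpr (ne_of_gt hφpos)
  have hZF : ∀ i, z i + F ≠ 0 := by
    intro i h
    have h2 := congrArg Complex.re h
    simp only [Complex.add_re, hFdef, Complex.ofReal_re, Complex.zero_re] at h2
    linarith [hzre i]
  have hWF : ∀ j, w j - F ≠ 0 := by
    intro j h
    have h2 := congrArg Complex.re h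
    simp only [Complex.sub_re, hFdef, Complex.ofReal_re, Complex.zero_re] at h2
    linarith [hwre j]
  have hZW : ∀ i j, z i - w j ≠ 0 := by
    intro i j h
    have h2 := congrArg Complex.re h
    simp only [Complex.sub_re, Complex.zero_re] at h2
    linarith [hzre i, hwre j]
  -- abs bounds
  have hzb : ∀ i, ‖z i - F‖ ≤ τ * ‖z i + F‖ := fun i =>
    key_ineq hη hz hφsq hφpos hφlt hτ (hzE i)
  have hwb : ∀ j, ‖w j + F‖ ≤ τ * ‖w j - F‖ := by
    intro j
    have h := key_ineq hη hz hφsq hφpos hφlt hτ (hwE j)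
    have e1 : -(w j) - F = -(w j + F) := by ring
    have e2 : -(w j) + F = -(w j - F) := by ring
    rw [e1, e2, norm_neg, norm_neg] at h
    exact h
  set a : Fin m → ℂ := fun i => ((z i - F) / (z i + F)) ^ k with ha
  set b : Fin n → ℂ := fun j => ((w j + F) / (w j - F)) ^ k with hb
  have hna : ∀ i, ‖a i‖ ≤ τ ^ k := by
    intro i
    have h1 : ‖(z i - F) / (z i + F)‖ ≤ τ := by
      rw [norm_div, div_le_iff₀ (norm_pos_iff.mpr (hZF i))]
      exact hzb i
    calc ‖a i‖ = ‖(z i - F) / (z i + F)‖ ^ k := by rw [ha]; exact norm_pow _ _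
      _ ≤ τ ^ k := pow_le_pow_left₀ (norm_nonneg _) h1 k
  have hnb : ∀ j, ‖b j‖ ≤ τ ^ k := by
    intro j
    have h1 : ‖(w j + F) / (w j - F)‖ ≤ τ := by
      rw [norm_div, div_le_iff₀ (norm_pos_iff.mpr (hWF j))]
      exact hwb j
    calc ‖b j‖ = ‖(w j + F) / (w j - F)‖ ^ k := by rw [hb]; exact norm_pow _ _
      _ ≤ τ ^ k := pow_le_pow_left₀ (norm_nonneg _) h1 k
  -- the rank-k correction
  set P : Matrix (Fin m) (Fin k) ℂ :=
    fun i l => (-2 * F) * (z i - F) ^ (l : ℕ) / (z i + F) ^ ((l : ℕ) + 1) with hP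
  set Q : Matrix (Fin k) (Fin n) ℂ :=
    fun l j => (w j + F) ^ (l : ℕ) / (w j - F) ^ ((l : ℕ) + 1) with hQ
  have hrank : (P * Q).rank < k + 1 := by
    refine Nat.lt_succ_of_le ((Matrix.rank_mul_le_right P Q).trans ?_)
    simpa using Q.rank_le_card_height
  have hCN : C - P * Q = Matrix.diagonal a * C * Matrix.diagonal b := by
    ext i j
    have hmul : (Matrix.diagonal a * C * Matrix.diagonal b) i j = a i * C i j * b j := by
      rw [Matrix.mul_diagonal, Matrix.diagonal_mul]
    have hpq : (P * Q) i j = ∑ l ∈ range k,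
        ((-2 * F) * (z i - F) ^ l / (z i + F) ^ (l + 1)) *
          ((w j + F) ^ l / (w j - F) ^ (l + 1)) := by
      rw [Matrix.mul_apply]
      exact Fin.sum_univ_eq_sum_range (fun l => ((-2 * F) * (z i - F) ^ l /
        (z i + F) ^ (l + 1)) * ((w j + F) ^ l / (w j - F) ^ (l + 1))) k
    rw [Matrix.sub_apply, hmul, hC i j, hpq]
    exact cauchy_identity k F (z i) (w j) hFne (hZW i j) (hZF i) (hWF j)
  -- norm bound
  have hspec : specNorm (C - P * Q) = ‖C - P * Q‖ := rfl
  have hspecC : specNorm C = ‖C‖ := rfl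
  have hbound : specNorm (C - P * Q) ≤ τ ^ k * ‖C‖ * τ ^ k := by
    rw [hspec, hCN]
    calc ‖Matrix.diagonal a * C * Matrix.diagonal b‖
        ≤ ‖Matrix.diagonal a * C‖ * ‖Matrix.diagonal b‖ := Matrix.l2_opNorm_mul _ _
      _ ≤ ‖Matrix.diagonal a‖ * ‖C‖ * ‖Matrix.diagonal b‖ :=
          mul_le_mul_of_nonneg_right (Matrix.l2_opNorm_mul _ _) (norm_nonneg _)
      _ ≤ τ ^ k * ‖C‖ * τ ^ k := by
          refine mul_le_mul ?_ (diag_opNorm_le b (by positivity) hnb) (norm_nonneg _)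
            (by positivity)
          exact mul_le_mul_of_nonneg_right (diag_opNorm_le a (by positivity) hna)
            (norm_nonneg _)
  have hfin : τ ^ k * ‖C‖ * τ ^ k = (μ₁ ^ k)⁻¹ * ‖C‖ := by
    have h1 : τ ^ k * τ ^ k = (μ₁ ^ k)⁻¹ := by
      have h2 : τ ^ k * τ ^ k = (τ ^ 2) ^ k := by ring
      rw [h2, hτsq, hμ, ← inv_pow, inv_div]
    calc τ ^ k * ‖C‖ * τ ^ k = (τ ^ k * τ ^ k) * ‖C‖ := by ring
      _ = (μ₁ ^ k)⁻¹ * ‖C‖ := by rw [h1]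
  have hbdd : BddBelow ((fun N : Matrix (Fin m) (Fin n) ℂ => specNorm (C - N)) ''
      {N | N.rank < k + 1}) := by
    refine ⟨0, ?_⟩
    rintro x ⟨N', -, rfl⟩
    exact norm_nonneg _
  have hmem : specNorm (C - P * Q) ∈ (fun N : Matrix (Fin m) (Fin n) ℂ =>
      specNorm (C - N)) '' {N | N.rank < k + 1} := ⟨P * Q, hrank, rfl⟩
  calc singularValue C (k + 1) ≤ specNorm (C - P * Q) := csInf_le hbdd hmem
    _ ≤ τ ^ k * ‖C‖ * τ ^ k := hbound
    _ = (μ₁ ^ k)⁻¹ * specNorm C := by rw [hfin, hspecC]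
end

section
/- ε-rank bound for a Cauchy matrix with nodes in opposite disks: Let E = {z ∈ ℂ : |z − z₀| ≤ η} with z₀, η ∈ ℝ and 0 < η < z₀, let φ = √(z₀² − η²), and let μ₁ = (z₀ + φ)/(z₀ − φ). Let C ∈ ℂ^{m×n} (m ≥ n) be the Cauchy matrix with entries C_{ij} = 1/(z_i − w_j), where z_1, …, z_m ∈ E and w_1, …, w_n ∈ −E. Then for every 0 < ε < 1, rank_ε(C) ≤ ⌈ log(1/ε) / log(μ₁) ⌉. -/
/-- The `ε`-rank of a matrix: the smallest `k` with `σ_{k+1}(M) ≤ ε ‖M‖₂`. -/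
noncomputable def epsRank {m n : ℕ} (M : Matrix (Fin m) (Fin n) ℂ) (ε : ℝ) : ℕ :=
  sInf {k : ℕ | singularValue M (k + 1) ≤ ε * specNorm M}

lemma specNorm_nonneg {m n : ℕ} (M : Matrix (Fin m) (Fin n) ℂ) : 0 ≤ specNorm M :=
  norm_nonneg _

lemma specNorm_apply_le {m n : ℕ} (M : Matrix (Fin m) (Fin n) ℂ)
    (x : EuclideanSpace ℂ (Fin n)) :
    ‖Matrix.toEuclideanLin M x‖ ≤ specNorm M * ‖x‖ := by
  have := (LinearMap.toContinuousLinearMap (Matrix.toEuclideanLin M)).le_opNorm x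
  simpa [specNorm] using this

lemma specNorm_le_bound {m n : ℕ} (M : Matrix (Fin m) (Fin n) ℂ) {b : ℝ} (hb : 0 ≤ b)
    (h : ∀ x : EuclideanSpace ℂ (Fin n), ‖Matrix.toEuclideanLin M x‖ ≤ b * ‖x‖) :
    specNorm M ≤ b := by
  apply ContinuousLinearMap.opNorm_le_bound _ hb
  intro x
  simpa using h x

lemma specNorm_mul_le {m n p : ℕ} (A : Matrix (Fin m) (Fin n) ℂ) (B : Matrix (Fin n) (Fin p) ℂ) :
    specNorm (A * B) ≤ specNorm A * specNorm B := by
  apply specNorm_le_bound _ (mul_nonneg (specNorm_nonneg A) (specNorm_nonneg B))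
  intro x
  have hcomp : Matrix.toEuclideanLin (A * B) x
      = Matrix.toEuclideanLin A (Matrix.toEuclideanLin B x) := by
    simp [Matrix.toEuclideanLin_apply, Matrix.mulVec_mulVec]
  rw [hcomp]
  calc ‖Matrix.toEuclideanLin A (Matrix.toEuclideanLin B x)‖
      ≤ specNorm A * ‖Matrix.toEuclideanLin B x‖ := specNorm_apply_le _ _
    _ ≤ specNorm A * (specNorm B * ‖x‖) :=
        mul_le_mul_of_nonneg_left (specNorm_apply_le _ _) (specNorm_nonneg A)
    _ = specNorm A * specNorm B * ‖x‖ := by ring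

lemma specNorm_diagonal_le {m : ℕ} (d : Fin m → ℂ) {b : ℝ} (hb : 0 ≤ b)
    (hd : ∀ i, ‖d i‖ ≤ b) :
    specNorm (Matrix.diagonal d) ≤ b := by
  apply specNorm_le_bound _ hb
  intro x
  rw [EuclideanSpace.norm_eq, EuclideanSpace.norm_eq]
  rw [← Real.sqrt_sq hb, ← Real.sqrt_mul (sq_nonneg b)]
  apply Real.sqrt_le_sqrt
  rw [Finset.mul_sum]
  apply Finset.sum_le_sum
  intro i _
  have hxi : (Matrix.toEuclideanLin (Matrix.diagonal d) x) i = d i * x i := by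
    simp [Matrix.toEuclideanLin_apply, Matrix.mulVec_diagonal]
  rw [hxi]
  have h1 : ‖d i * x i‖ ≤ b * ‖x i‖ := by
    rw [norm_mul]
    exact mul_le_mul_of_nonneg_right (hd i) (norm_nonneg _)
  calc ‖d i * x i‖ ^ 2 ≤ (b * ‖x i‖) ^ 2 := by
        apply pow_le_pow_left₀ (norm_nonneg _) h1
    _ = b ^ 2 * ‖x i‖ ^ 2 := by ring

lemma apollonius (z₀ η φ : ℝ) (hφ0 : 0 ≤ φ) (hz0φ : 0 < z₀ + φ)
    (hφ2 : φ ^ 2 = z₀ ^ 2 - η ^ 2)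
    (u : ℂ) (hu : ‖u - (z₀ : ℂ)‖ ≤ η) :
    (z₀ + φ) * ‖u - (φ : ℂ)‖ ≤ η * ‖u + (φ : ℂ)‖ := by
  have hη0 : (0:ℝ) ≤ η := le_trans (norm_nonneg _) hu
  have h1 : ‖u - (z₀:ℂ)‖ ^ 2 ≤ η ^ 2 :=
    pow_le_pow_left₀ (norm_nonneg _) hu 2
  rw [Complex.sq_norm, Complex.normSq_apply] at h1
  simp only [Complex.sub_re, Complex.sub_im, Complex.ofReal_re, Complex.ofReal_im,
    sub_zero] at h1
  have hL : 0 ≤ (z₀ + φ) * ‖u - (φ:ℂ)‖ :=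
    mul_nonneg hz0φ.le (norm_nonneg _)
  have hR : 0 ≤ η * ‖u + (φ:ℂ)‖ := mul_nonneg hη0 (norm_nonneg _)
  rw [← Real.sqrt_sq hL, ← Real.sqrt_sq hR]
  apply Real.sqrt_le_sqrt
  rw [mul_pow, mul_pow, Complex.sq_norm, Complex.sq_norm, Complex.normSq_apply,
    Complex.normSq_apply]
  simp only [Complex.sub_re, Complex.sub_im, Complex.add_re, Complex.add_im,
    Complex.ofReal_re, Complex.ofReal_im, sub_zero, add_zero]
  nlinarith [mul_nonneg (mul_nonneg hz0φ.le hφ0) (sub_nonneg.2 h1)]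

open Polynomial in
/-- **ε-rank bound for a Cauchy matrix with nodes in opposite disks.**
If `C_{ij} = 1/(zᵢ - wⱼ)` with `zᵢ ∈ E = {z : |z - z₀| ≤ η}`, `wⱼ ∈ -E`
(`0 < η < z₀`, `m ≥ n`), `φ = √(z₀² - η²)`, `μ₁ = (z₀ + φ)/(z₀ - φ)`, then for every
`0 < ε < 1`, `rank_ε(C) ≤ ⌈log(1/ε)/log(μ₁)⌉`. -/
theorem cauchy_epsRank_bound {m n : ℕ} (hmn : n ≤ m) (z₀ η : ℝ)
    (hη : 0 < η) (hz : η < z₀)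
    (φ : ℝ) (hφ : φ = Real.sqrt (z₀ ^ 2 - η ^ 2))
    (μ₁ : ℝ) (hμ : μ₁ = (z₀ + φ) / (z₀ - φ))
    (z : Fin m → ℂ) (w : Fin n → ℂ)
    (hzE : ∀ i, ‖z i - (z₀ : ℂ)‖ ≤ η)
    (hwE : ∀ j, ‖-(w j) - (z₀ : ℂ)‖ ≤ η)
    (C : Matrix (Fin m) (Fin n) ℂ) (hC : ∀ i j, C i j = (z i - w j)⁻¹)
    (ε : ℝ) (hε0 : 0 < ε) (hε1 : ε < 1) :
    epsRank C ε ≤ ⌈Real.log (1 / ε) / Real.log μ₁⌉₊ := by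
  classical
  set k := ⌈Real.log (1 / ε) / Real.log μ₁⌉₊ with hkdef
  have hz0 : (0:ℝ) < z₀ := hη.trans hz
  have hφ2 : φ ^ 2 = z₀ ^ 2 - η ^ 2 := by
    rw [hφ]; exact Real.sq_sqrt (by nlinarith)
  have hφ0 : 0 < φ := by
    rw [hφ]; exact Real.sqrt_pos.2 (by nlinarith)
  have hφz : φ < z₀ := by nlinarith
  have hμ1 : 1 < μ₁ := by
    rw [hμ, lt_div_iff₀ (by linarith)]; linarith
  have hlogμ : 0 < Real.log μ₁ := Real.log_pos hμ1
  have hk1 : 1 ≤ k := by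
    rw [hkdef]
    refine Nat.one_le_ceil_iff.mpr ?_
    apply div_pos _ hlogμ
    apply Real.log_pos
    rw [one_div]; exact one_lt_inv₀ hε0 |>.mpr hε1
  have hμk : (1 / μ₁) ^ k ≤ ε := by
    have hle : Real.log (1/ε) / Real.log μ₁ ≤ (k : ℝ) := Nat.le_ceil _
    have h2 : Real.log (1/ε) ≤ (k : ℝ) * Real.log μ₁ := by
      rwa [div_le_iff₀ hlogμ] at hle
    have h3 : Real.log (1/ε) ≤ Real.log (μ₁ ^ k) := by rwa [Real.log_pow]
    have h4 : 1/ε ≤ μ₁ ^ k := by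
      have := Real.exp_le_exp.2 h3
      rwa [Real.exp_log (by positivity), Real.exp_log (by positivity)] at this
    rw [div_pow, one_pow, div_le_iff₀ (by positivity)]
    rw [div_le_iff₀ hε0] at h4
    linarith [h4]
  -- geometry of the nodes
  have hzre : ∀ i, z₀ - η ≤ (z i).re := by
    intro i
    have := (Complex.abs_re_le_norm (z i - (z₀:ℂ))).trans (hzE i)
    simp only [Complex.sub_re, Complex.ofReal_re] at this
    have := abs_le.1 this
    linarith [this.1]
  have hwre : ∀ j, (w j).re ≤ -(z₀ - η) := by
    intro j
    have := (Complex.abs_re_le_norm (-(w j) - (z₀:ℂ))).trans (hwE j)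
    simp only [Complex.sub_re, Complex.neg_re, Complex.ofReal_re] at this
    have := abs_le.1 this
    linarith [this.1]
  have hzφ : ∀ i, z i + (φ:ℂ) ≠ 0 := by
    intro i h
    have := congrArg Complex.re h
    simp only [Complex.add_re, Complex.ofReal_re, Complex.zero_re] at this
    have := hzre i; linarith
  have hwφ : ∀ j, w j - (φ:ℂ) ≠ 0 := by
    intro j h
    have := congrArg Complex.re h
    simp only [Complex.sub_re, Complex.ofReal_re, Complex.zero_re] at this
    have := hwre j; linarith
  have hzw : ∀ i j, z i - w j ≠ 0 := by
    intro i j h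
    have := congrArg Complex.re h
    simp only [Complex.sub_re, Complex.zero_re] at this
    have := hzre i; have := hwre j; linarith
  -- polynomials p, q with r = p/q
  set p : ℂ[X] := (X - Polynomial.C (φ:ℂ)) ^ k with hp
  set q : ℂ[X] := (X + Polynomial.C (φ:ℂ)) ^ k with hq
  have hpe : ∀ u : ℂ, p.eval u = (u - (φ:ℂ)) ^ k := by intro u; simp [hp]
  have hqe : ∀ u : ℂ, q.eval u = (u + (φ:ℂ)) ^ k := by intro u; simp [hq]
  have hQz : ∀ i, q.eval (z i) ≠ 0 := fun i => by
    rw [hqe]; exact pow_ne_zero _ (hzφ i)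
  have hPw : ∀ j, p.eval (w j) ≠ 0 := fun j => by
    rw [hpe]; exact pow_ne_zero _ (hwφ j)
  -- divided-difference polynomials
  have hSex : ∀ j : Fin n, ∃ S : ℂ[X], S.natDegree < k ∧
      Polynomial.C (p.eval (w j)) * q - Polynomial.C (q.eval (w j)) * p
        = (X - Polynomial.C (w j)) * S := by
    intro j
    set F : ℂ[X] := Polynomial.C (p.eval (w j)) * q - Polynomial.C (q.eval (w j)) * p with hF
    have hroot : F.IsRoot (w j) := by
      simp [hF, Polynomial.IsRoot, mul_comm]
    obtain ⟨S, hSf⟩ := Polynomial.dvd_iff_isRoot.2 hroot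
    refine ⟨S, ?_, hSf⟩
    by_cases hS0 : S = 0
    · rw [hS0, Polynomial.natDegree_zero]; omega
    · have hdq : q.natDegree = k := by
        rw [hq, Polynomial.natDegree_pow]
        simp [Polynomial.natDegree_X_add_C]
      have hdp : p.natDegree = k := by
        rw [hp, Polynomial.natDegree_pow]
        simp [Polynomial.natDegree_X_sub_C]
      have hdF : F.natDegree ≤ k := by
        apply le_trans (Polynomial.natDegree_sub_le _ _)
        apply max_le
        · exact le_trans (Polynomial.natDegree_C_mul_le _ _) hdq.le
        · exact le_trans (Polynomial.natDegree_C_mul_le _ _) hdp.le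
      have hXm : (X - Polynomial.C (w j) : ℂ[X]) ≠ 0 := Polynomial.X_sub_C_ne_zero _
      have heq : F.natDegree = 1 + S.natDegree := by
        rw [hSf, Polynomial.natDegree_mul hXm hS0, Polynomial.natDegree_X_sub_C]
      omega
  choose S hSdeg hSfact using hSex
  -- the rank-k approximant
  set A : Matrix (Fin m) (Fin k) ℂ := fun i a => (z i) ^ (a:ℕ) / q.eval (z i) with hA
  set B : Matrix (Fin k) (Fin n) ℂ := fun a j => (S j).coeff a / p.eval (w j) with hB
  set N : Matrix (Fin m) (Fin n) ℂ := A * B with hN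
  have hNrank : N.rank < k + 1 := by
    apply Nat.lt_succ_of_le
    exact le_trans (Matrix.rank_mul_le_left A B)
      (le_trans (Matrix.rank_le_card_width A) (by simp))
  have hNentry : ∀ i j, N i j = (S j).eval (z i) / (q.eval (z i) * p.eval (w j)) := by
    intro i j
    have hev : (S j).eval (z i) = ∑ a ∈ Finset.range k, (S j).coeff a * (z i) ^ a :=
      Polynomial.eval_eq_sum_range' (hSdeg j) _
    rw [hN, Matrix.mul_apply]
    rw [hev, Finset.sum_div, ← Fin.sum_univ_eq_sum_range
      (fun a => (S j).coeff a * (z i) ^ a / (q.eval (z i) * p.eval (w j))) k]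
    apply Finset.sum_congr rfl
    intro a _
    rw [hA, hB]
    field_simp
  -- diagonal factorization of the error
  set d₁ : Fin m → ℂ := fun i => p.eval (z i) / q.eval (z i) with hd₁
  set d₂ : Fin n → ℂ := fun j => q.eval (w j) / p.eval (w j) with hd₂
  have hfact : C - N = Matrix.diagonal d₁ * C * Matrix.diagonal d₂ := by
    ext i j
    have hkey := congrArg (Polynomial.eval (z i)) (hSfact j)
    simp only [Polynomial.eval_mul, Polynomial.eval_sub, Polynomial.eval_C,
      Polynomial.eval_X] at hkey
    rw [Matrix.sub_apply, Matrix.mul_diagonal, Matrix.diagonal_mul, hNentry, hC, hd₁, hd₂]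
    have h1 := hQz i; have h2 := hPw j; have h3 := hzw i j
    have hS : (S j).eval (z i) = (p.eval (w j) * q.eval (z i) - q.eval (w j) * p.eval (z i)) / (z i - w j) :=
      eq_div_of_mul_eq h3 (by linear_combination -hkey)
    rw [hS]
    field_simp
    ring
  -- norm bounds for the diagonal factors
  set c : ℝ := η / (z₀ + φ) with hc
  have hz0φ : (0:ℝ) < z₀ + φ := by linarith
  have hc0 : 0 ≤ c := by positivity
  have hd1b : ∀ i, ‖d₁ i‖ ≤ c ^ k := by
    intro i
    have hap := apollonius z₀ η φ hφ0.le hz0φ hφ2 (z i) (hzE i)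
    have habs : 0 < ‖z i + (φ:ℂ)‖ :=
      norm_pos_iff.mpr (hzφ i)
    have h1 : ‖z i - (φ:ℂ)‖ / ‖z i + (φ:ℂ)‖ ≤ c := by
      rw [div_le_iff₀ habs, hc, div_mul_eq_mul_div, le_div_iff₀ hz0φ]
      linarith [hap]
    calc ‖d₁ i‖
        = (‖z i - (φ:ℂ)‖ / ‖z i + (φ:ℂ)‖) ^ k := by
          rw [hd₁]
          simp only [hpe, hqe, norm_div, norm_pow, div_pow]
      _ ≤ c ^ k := pow_le_pow_left₀ (by positivity) h1 k
  have hd2b : ∀ j, ‖d₂ j‖ ≤ c ^ k := by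
    intro j
    have hap := apollonius z₀ η φ hφ0.le hz0φ hφ2 (-(w j)) (hwE j)
    have e1 : ‖-(w j) - (φ:ℂ)‖ = ‖w j + (φ:ℂ)‖ := by
      rw [show -(w j) - (φ:ℂ) = -(w j + (φ:ℂ)) by ring, norm_neg]
    have e2 : ‖-(w j) + (φ:ℂ)‖ = ‖w j - (φ:ℂ)‖ := by
      rw [show -(w j) + (φ:ℂ) = -(w j - (φ:ℂ)) by ring, norm_neg]
    rw [e1, e2] at hap
    have habs : 0 < ‖w j - (φ:ℂ)‖ :=
      norm_pos_iff.mpr (hwφ j)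
    have h1 : ‖w j + (φ:ℂ)‖ / ‖w j - (φ:ℂ)‖ ≤ c := by
      rw [div_le_iff₀ habs, hc, div_mul_eq_mul_div, le_div_iff₀ hz0φ]
      linarith [hap]
    calc ‖d₂ j‖
        = (‖w j + (φ:ℂ)‖ / ‖w j - (φ:ℂ)‖) ^ k := by
          rw [hd₂]
          simp only [hpe, hqe, norm_div, norm_pow, div_pow]
      _ ≤ c ^ k := pow_le_pow_left₀ (by positivity) h1 k
  have hc2 : c ^ 2 = 1 / μ₁ := by
    rw [hμ, one_div_div, hc, div_pow]
    rw [div_eq_div_iff (by positivity) (ne_of_gt hz0φ)]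
    linear_combination (z₀ + φ) * hφ2
  -- spectral norm bound
  have hCN : specNorm (C - N) ≤ (1 / μ₁) ^ k * specNorm C := by
    rw [hfact]
    have h3 := specNorm_diagonal_le d₁ (pow_nonneg hc0 k) hd1b
    have h4 := specNorm_diagonal_le d₂ (pow_nonneg hc0 k) hd2b
    calc specNorm (Matrix.diagonal d₁ * C * Matrix.diagonal d₂)
        ≤ specNorm (Matrix.diagonal d₁ * C) * specNorm (Matrix.diagonal d₂) :=
          specNorm_mul_le _ _
      _ ≤ specNorm (Matrix.diagonal d₁) * specNorm C * specNorm (Matrix.diagonal d₂) :=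
          mul_le_mul_of_nonneg_right (specNorm_mul_le _ _) (specNorm_nonneg _)
      _ ≤ c ^ k * specNorm C * c ^ k := by
          apply mul_le_mul _ h4 (specNorm_nonneg _) (mul_nonneg (pow_nonneg hc0 k) (specNorm_nonneg C))
          exact mul_le_mul_of_nonneg_right h3 (specNorm_nonneg _)
      _ = (c ^ 2) ^ k * specNorm C := by ring
      _ = (1 / μ₁) ^ k * specNorm C := by rw [hc2]
  -- conclude
  have hsv : singularValue C (k + 1) ≤ ε * specNorm C := by
    have hmem : specNorm (C - N)
        ∈ (fun N' : Matrix (Fin m) (Fin n) ℂ => specNorm (C - N')) '' {N' | N'.rank < k + 1} :=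
      ⟨N, hNrank, rfl⟩
    have hbdd : BddBelow ((fun N' : Matrix (Fin m) (Fin n) ℂ => specNorm (C - N'))
        '' {N' | N'.rank < k + 1}) := by
      refine ⟨0, ?_⟩
      rintro x ⟨N', -, rfl⟩
      exact specNorm_nonneg _
    refine le_trans (csInf_le hbdd hmem) (le_trans hCN ?_)
    exact mul_le_mul_of_nonneg_right hμk (specNorm_nonneg _)
  exact Nat.sInf_le hsv
end

section
/- Closed-form Hadamard-product solution of the Sylvester equation: Let A ∈ ℂ^{m×m} and B ∈ ℂ^{n×n} be normal matrices with disjoint spectra, with unitary eigendecompositions A = Y Λ_A Y^* and B = W Λ_B W^* (Λ_A, Λ_B diagonal, Y, W unitary). Let C ∈ ℂ^{m×n} be the Cauchy matrix with entries C_{jk} = 1 / ((Λ_A)_{jj} − (Λ_B)_{kk}). Then the unique solution X of AX − XB = F is X = Y ( C ∘ (Y^* F W) ) W^*, where '∘' denotes the Hadamard (entrywise) matrix product. -/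
/-- **Closed-form Hadamard-product solution of the Sylvester equation.**
If `A = Y Λ_A Yᴴ` and `B = W Λ_B Wᴴ` are unitary eigendecompositions of normal matrices
with disjoint spectra, and `C` is the Cauchy matrix `C_{jk} = 1/((Λ_A)ⱼ - (Λ_B)ₖ)`, then
the unique solution of `AX - XB = F` is `X = Y (C ∘ (Yᴴ F W)) Wᴴ`, where `∘` is the
Hadamard product. -/
theorem sylvester_hadamard_closed_form {m n : ℕ}
    (A : Matrix (Fin m) (Fin m) ℂ) (B : Matrix (Fin n) (Fin n) ℂ)
    (Y : Matrix (Fin m) (Fin m) ℂ) (W : Matrix (Fin n) (Fin n) ℂ)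
    (hY : Y ∈ Matrix.unitaryGroup (Fin m) ℂ)
    (hW : W ∈ Matrix.unitaryGroup (Fin n) ℂ)
    (ΛA : Fin m → ℂ) (ΛB : Fin n → ℂ)
    (hAeig : A = Y * Matrix.diagonal ΛA * Y.conjTranspose)
    (hBeig : B = W * Matrix.diagonal ΛB * W.conjTranspose)
    (hdisj : ∀ (j : Fin m) (k : Fin n), ΛA j ≠ ΛB k)
    (C : Matrix (Fin m) (Fin n) ℂ) (hC : ∀ j k, C j k = (ΛA j - ΛB k)⁻¹)
    (F X : Matrix (Fin m) (Fin n) ℂ) (hX : A * X - X * B = F) :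
    X = Y * Matrix.hadamard C (Y.conjTranspose * F * W) * W.conjTranspose := by
  have hY1 : Y * Y.conjTranspose = 1 := by
    simpa [Matrix.star_eq_conjTranspose] using (Matrix.mem_unitaryGroup_iff.mp hY)
  have hY2 : Y.conjTranspose * Y = 1 := by
    simpa [Matrix.star_eq_conjTranspose] using (Matrix.mem_unitaryGroup_iff'.mp hY)
  have hW1 : W * W.conjTranspose = 1 := by
    simpa [Matrix.star_eq_conjTranspose] using (Matrix.mem_unitaryGroup_iff.mp hW)
  have hW2 : W.conjTranspose * W = 1 := by
    simpa [Matrix.star_eq_conjTranspose] using (Matrix.mem_unitaryGroup_iff'.mp hW)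
  set G := Y.conjTranspose * X * W with hG
  have hF : Y.conjTranspose * F * W
      = Matrix.diagonal ΛA * G - G * Matrix.diagonal ΛB := by
    rw [← hX, hAeig, hBeig, hG]
    rw [Matrix.mul_sub, Matrix.sub_mul]
    congr 1
    · calc Y.conjTranspose * (Y * Matrix.diagonal ΛA * Y.conjTranspose * X) * W
          = (Y.conjTranspose * Y) * Matrix.diagonal ΛA
              * (Y.conjTranspose * X * W) := by
            simp only [Matrix.mul_assoc]
        _ = Matrix.diagonal ΛA * (Y.conjTranspose * X * W) := by
            rw [hY2, Matrix.one_mul]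
    · calc Y.conjTranspose * (X * (W * Matrix.diagonal ΛB * W.conjTranspose)) * W
          = (Y.conjTranspose * X * W) * Matrix.diagonal ΛB
              * (W.conjTranspose * W) := by
            simp only [Matrix.mul_assoc]
        _ = Y.conjTranspose * X * W * Matrix.diagonal ΛB := by
            rw [hW2, Matrix.mul_one]
  have hHad : Matrix.hadamard C (Y.conjTranspose * F * W) = G := by
    ext j k
    rw [Matrix.hadamard_apply, hF, hC]
    simp only [Matrix.sub_apply, Matrix.diagonal_mul, Matrix.mul_diagonal]
    have h := sub_ne_zero.mpr (hdisj j k)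
    field_simp
  rw [hHad, hG]
  calc X = (Y * Y.conjTranspose) * X * (W * W.conjTranspose) := by
        rw [hY1, hW1, Matrix.one_mul, Matrix.mul_one]
    _ = Y * (Y.conjTranspose * X * W) * W.conjTranspose := by
        simp only [Matrix.mul_assoc]
end
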